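/- arXiv:1501.00509 — 7 statements merged into one kernel-verified Lean document; each statement's English description precedes it below -/
import Mathlib

section
/- The exponential generating function T^•(z) = Σ_{n≥1} n^{n-1} z^n/n! of rooted labelled trees satisfies the functional equation T^•(z) = z·exp(T^•(z)) as an identity of formal power series. -/
open PowerSeries
open Finset

/-- Composition `f ∘ g` of formal power series, valid when `g` has zero constant term:
the `n`-th coefficient is `∑_{k ≤ n} (coeff k f) · (coeff n (g^k))`. -/
noncomputable def PSComp (f g : PowerSeries ℝ) : PowerSeries ℝ :=
  PowerSeries.mk fun n => ∑ k ∈ Finset.range (n + 1),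
    (PowerSeries.coeff k f) * PowerSeries.coeff n (g ^ k)

/-- The EGF of rooted labelled trees, `T^•(z) = Σ_{n≥1} n^{n-1} z^n/n!`. -/
noncomputable def Tdot : PowerSeries ℝ :=
  PowerSeries.mk fun n => if n = 0 then 0 else (n : ℝ) ^ (n - 1) / (Nat.factorial n)


/-- Abel polynomial-type terms: `Tk k x = x (x+k)^(k-1)`, with `Tk 0 = 1`. -/
noncomputable def Tk : ℕ → ℝ → ℝ
  | 0, _ => 1
  | k+1, x => x * (x + k + 1) ^ k

lemma Tk_zero (x : ℝ) : Tk 0 x = 1 := rfl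
lemma Tk_succ (k : ℕ) (x : ℝ) : Tk (k+1) x = x * (x + k + 1) ^ k := rfl

lemma hasDerivAt_Tk (k : ℕ) (x : ℝ) :
    HasDerivAt (Tk k) ((k : ℝ) * Tk (k - 1) (x + 1)) x := by
  rcases k with _ | k
  · have hT : Tk 0 = fun _ => 1 := rfl
    rw [hT]
    simpa using hasDerivAt_const x (1:ℝ)
  · have hb : HasDerivAt (fun x : ℝ => (x + k + 1) ^ k) ((k:ℝ) * (x + k + 1)^(k-1)) x := by
      have h1 := ((hasDerivAt_id x).add_const ((k:ℝ)+1)).fun_pow k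
      have he : (fun y : ℝ => (id y + ((k:ℝ)+1)) ^ k) = fun x : ℝ => (x + k + 1) ^ k := by
        funext t; simp [add_assoc]
      rw [he] at h1
      refine h1.congr_deriv ?_
      simp only [id_eq]
      ring
    have h := (hasDerivAt_id x).fun_mul hb
    simp only [id_eq] at h
    have hfun : Tk (k+1) = fun x : ℝ => x * (x + k + 1) ^ k := by funext t; rfl
    rw [hfun]
    refine h.congr_deriv ?_
    rcases k with _ | j
    · norm_num [Tk]
    · simp only [Nat.add_sub_cancel, Tk_succ]
      push_cast
      ring
lemma abel_identity (n : ℕ) (x y : ℝ) :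
    ∑ k ∈ range (n+1), (n.choose k : ℝ) * Tk k x * (y + ((n - k : ℕ) : ℝ)) ^ (n - k)
      = (x + y + n) ^ n := by
  induction n generalizing x y with
  | zero => simp [Tk]
  | succ n ih =>
    have key : ∀ x : ℝ, HasDerivAt (fun t : ℝ =>
        (∑ k ∈ range (n+1+1), ((n+1).choose k : ℝ) * Tk k t * (y + (((n+1) - k : ℕ) : ℝ)) ^ ((n+1) - k))
        - (t + (y + ((n:ℝ)+1))) ^ (n+1)) 0 x := by
      intro x
      have hsum : HasDerivAt (fun t : ℝ => ∑ k ∈ range (n+1+1),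
          ((n+1).choose k : ℝ) * Tk k t * (y + (((n+1) - k : ℕ) : ℝ)) ^ ((n+1) - k))
          (∑ k ∈ range (n+1+1),
          ((n+1).choose k : ℝ) * ((k : ℝ) * Tk (k-1) (x+1)) * (y + (((n+1) - k : ℕ) : ℝ)) ^ ((n+1) - k)) x := by
        apply HasDerivAt.fun_sum
        intro k _
        exact ((hasDerivAt_Tk k x).const_mul _).mul_const _
      have hval : (∑ k ∈ range (n+1+1),
          ((n+1).choose k : ℝ) * ((k : ℝ) * Tk (k-1) (x+1)) * (y + (((n+1) - k : ℕ) : ℝ)) ^ ((n+1) - k))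
          = ((n:ℝ)+1) * (x + (y + ((n:ℝ)+1))) ^ n := by
        rw [Finset.sum_range_succ']
        simp only [Nat.cast_zero, zero_mul, mul_zero, add_zero]
        have hterm : ∀ i ∈ range (n+1),
            ((n+1).choose (i+1) : ℝ) * (((i+1:ℕ) : ℝ) * Tk ((i+1)-1) (x+1)) * (y + (((n+1) - (i+1) : ℕ) : ℝ)) ^ ((n+1) - (i+1))
            = ((n:ℝ)+1) * ((n.choose i : ℝ) * Tk i (x+1) * (y + ((n - i : ℕ) : ℝ)) ^ (n - i)) := by
          intro i _
          have hc : ((n:ℕ)+1) * n.choose i = (n+1).choose (i+1) * (i+1) := Nat.add_one_mul_choose_eq n i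
          have hc' : (((n+1).choose (i+1) : ℝ)) * ((i:ℝ)+1) = ((n:ℝ)+1) * (n.choose i : ℝ) := by
            exact_mod_cast congrArg (fun m : ℕ => (m : ℝ)) hc.symm
          have h1 : ((n+1) - (i+1) : ℕ) = n - i := by omega
          rw [h1]
          simp only [Nat.add_sub_cancel]
          push_cast
          linear_combination (Tk i (x+1) * (y + ((n - i : ℕ) : ℝ)) ^ (n - i)) * hc'
        rw [Finset.sum_congr rfl hterm, ← Finset.mul_sum, ih (x+1) y]
        ring
      have hrhs : HasDerivAt (fun t : ℝ => (t + (y + ((n:ℝ)+1))) ^ (n+1))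
          (((n:ℝ)+1) * (x + (y + ((n:ℝ)+1))) ^ n) x := by
        have := ((hasDerivAt_id x).add_const (y + ((n:ℝ)+1))).fun_pow (n+1)
        have he : (fun y_1 : ℝ => (id y_1 + (y + ((n:ℝ)+1))) ^ (n+1)) = fun t : ℝ => (t + (y + ((n:ℝ)+1))) ^ (n+1) := by
          funext t; simp
        rw [he] at this
        simpa using this
      have hfin := hsum.fun_sub hrhs
      rw [hval] at hfin
      simpa using hfin
    have hdiff : Differentiable ℝ _ := fun x => (key x).differentiableAt
    have hzero : ∀ t, deriv (fun t : ℝ =>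
        (∑ k ∈ range (n+1+1), ((n+1).choose k : ℝ) * Tk k t * (y + (((n+1) - k : ℕ) : ℝ)) ^ ((n+1) - k))
        - (t + (y + ((n:ℝ)+1))) ^ (n+1)) t = 0 := fun t => (key t).deriv
    have h0 : (∑ k ∈ range (n+1+1), ((n+1).choose k : ℝ) * Tk k 0 * (y + (((n+1) - k : ℕ) : ℝ)) ^ ((n+1) - k))
        - ((0:ℝ) + (y + ((n:ℝ)+1))) ^ (n+1) = 0 := by
      rw [Finset.sum_eq_single 0]
      · rw [Tk_zero]; simp only [Nat.choose_zero_right, Nat.cast_one]; push_cast; ring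
      · intro k _ hk
        rcases k with _ | k
        · exact absurd rfl hk
        · simp [Tk]
      · intro h; simp at h
    have heq := (is_const_of_deriv_eq_zero hdiff hzero x 0).trans h0
    have := sub_eq_zero.mp heq
    rw [this]
    push_cast
    ring

lemma swapped (n : ℕ) (x : ℝ) {y : ℝ} (hy : y ≠ 0) :
    ∑ k ∈ range n, (n.choose k : ℝ) * (x + k) ^ k * (y + ((n - k : ℕ) : ℝ)) ^ (n - k - 1)
      = ∑ i ∈ range n, (n.choose i : ℝ) * (x + n) ^ i * y ^ (n - 1 - i) := by
  apply mul_left_cancel₀ hy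
  -- RHS: y * ∑ = (x+n+y)^n - (x+n)^n
  have hrhs : y * ∑ i ∈ range n, (n.choose i : ℝ) * (x + n) ^ i * y ^ (n - 1 - i)
      = (x + n + y) ^ n - (x + n) ^ n := by
    rw [add_pow]
    rw [Finset.sum_range_succ]
    simp only [Nat.choose_self, Nat.cast_one, Nat.sub_self, pow_zero, mul_one]
    rw [Finset.mul_sum]
    rw [add_sub_cancel_right]
    apply Finset.sum_congr rfl
    intro i hi
    have hi' : i < n := Finset.mem_range.mp hi
    have : y * y ^ (n - 1 - i) = y ^ (n - i) := by
      rw [← pow_succ']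
      congr 1
      omega
    linear_combination ((n.choose i : ℝ) * (x + n) ^ i) * this
  -- LHS: y * ∑ = (y+x+n)^n - (x+n)^n
  have hlhs : y * ∑ k ∈ range n, (n.choose k : ℝ) * (x + k) ^ k * (y + ((n - k : ℕ) : ℝ)) ^ (n - k - 1)
      = (y + x + n) ^ n - (x + n) ^ n := by
    have habel := abel_identity n y x
    -- reflect
    have hrefl : ∑ k ∈ range (n+1), (n.choose k : ℝ) * Tk k y * (x + ((n - k : ℕ) : ℝ)) ^ (n - k)
        = ∑ j ∈ range (n+1), (n.choose j : ℝ) * Tk (n - j) y * (x + (j : ℝ)) ^ j := by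
      rw [← Finset.sum_range_reflect]
      apply Finset.sum_congr rfl
      intro j hj
      have hj' : j ≤ n := by have := Finset.mem_range.mp hj; omega
      have h1 : n + 1 - 1 - j = n - j := by omega
      have h2 : n - (n - j) = j := by omega
      rw [h1, h2, Nat.choose_symm hj']
    rw [hrefl] at habel
    rw [Finset.sum_range_succ] at habel
    have h3 : n - n = 0 := by omega
    rw [h3, Tk_zero] at habel
    simp only [Nat.choose_self, Nat.cast_one, one_mul, mul_one] at habel
    have hsum : ∑ j ∈ range n, (n.choose j : ℝ) * Tk (n - j) y * (x + (j:ℝ)) ^ j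
        = y * ∑ k ∈ range n, (n.choose k : ℝ) * (x + k) ^ k * (y + ((n - k : ℕ) : ℝ)) ^ (n - k - 1) := by
      rw [Finset.mul_sum]
      apply Finset.sum_congr rfl
      intro j hj
      have hj' : j < n := Finset.mem_range.mp hj
      obtain ⟨m, hm⟩ : ∃ m, n - j = m + 1 := ⟨n - j - 1, by omega⟩
      rw [hm, Tk_succ]
      have hcast : ((m:ℝ) + 1) = ((n - j : ℕ) : ℝ) := by rw [hm]; push_cast; ring
      have hexp : m = n - j - 1 := by omega
      simp only [Nat.add_sub_cancel]
      push_cast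
      ring
    rw [hsum] at habel
    linarith [habel]
  rw [hlhs, hrhs]
  ring

lemma keyid (n : ℕ) (hn : 1 ≤ n) :
    ∑ k ∈ range n, (n.choose k : ℝ) * (k:ℝ)^k * (((n - k : ℕ)) : ℝ) ^ (n - k - 1) = (n:ℝ)^n := by
  -- extend swapped (x := 0) to y = 0 by continuity
  have hfun : (fun y : ℝ => ∑ k ∈ range n, (n.choose k : ℝ) * ((0:ℝ) + k) ^ k * (y + ((n - k : ℕ) : ℝ)) ^ (n - k - 1))
      = fun y : ℝ => ∑ i ∈ range n, (n.choose i : ℝ) * ((0:ℝ) + n) ^ i * y ^ (n - 1 - i) := by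
    apply Continuous.ext_on (dense_compl_singleton (0:ℝ))
    · continuity
    · continuity
    · intro y hy
      exact swapped n 0 hy
  have h0 := congrFun hfun 0
  have hL : ∑ k ∈ range n, (n.choose k : ℝ) * ((0:ℝ) + k) ^ k * ((0:ℝ) + ((n - k : ℕ) : ℝ)) ^ (n - k - 1)
      = ∑ k ∈ range n, (n.choose k : ℝ) * (k:ℝ)^k * (((n - k : ℕ)) : ℝ) ^ (n - k - 1) := by
    apply Finset.sum_congr rfl; intro k _; norm_num
  have hR : ∑ i ∈ range n, (n.choose i : ℝ) * ((0:ℝ) + n) ^ i * (0:ℝ) ^ (n - 1 - i) = (n:ℝ)^n := by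
    rw [Finset.sum_eq_single (n-1)]
    · have h1 : n - 1 - (n - 1) = 0 := by omega
      have h2 : n.choose (n-1) = n := by
        rw [Nat.choose_symm hn, Nat.choose_one_right]
      rw [h1, pow_zero, mul_one, h2, zero_add]
      have h3 : n - 1 + 1 = n := by omega
      calc (n:ℝ) * (n:ℝ) ^ (n-1) = (n:ℝ) ^ (n-1+1) := by rw [pow_succ']
        _ = (n:ℝ) ^ n := by rw [h3]
    · intro i hi hne
      have : n - 1 - i ≠ 0 := by have := Finset.mem_range.mp hi; omega
      rw [zero_pow this, mul_zero]
    · intro h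
      exact absurd (Finset.mem_range.mpr (by omega)) h
  rw [hL] at h0
  rw [h0, hR]

/-- Coefficients of the tree EGF. -/
noncomputable def tA (m : ℕ) : ℝ := if m = 0 then 0 else (m : ℝ) ^ (m - 1) / (Nat.factorial m)

lemma tA_succ (m : ℕ) : tA (m+1) = ((m:ℝ)+1) ^ m / (Nat.factorial (m+1)) := by
  simp [tA]

lemma recA (n : ℕ) :
    ((n:ℝ)+1) * tA (n+2) = ∑ i ∈ range (n+1), ((i:ℝ)+1) * tA (i+1) * tA (n+1-i) := by
  have hkey := keyid (n+2) (by omega)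
  rw [Finset.sum_range_succ'] at hkey
  -- k=0 term
  have h0 : ((n+2).choose 0 : ℝ) * ((0:ℕ):ℝ)^0 * (((n+2-0 : ℕ)) : ℝ) ^ (n+2-0-1) = ((n:ℝ)+2)^(n+1) := by
    norm_num
  rw [h0] at hkey
  -- termwise identification
  have hterm : ∀ i ∈ range (n+1),
      ((i:ℝ)+1) * tA (i+1) * tA (n+1-i)
      = (((n+2).choose (i+1) : ℝ) * ((i+1:ℕ):ℝ)^(i+1) * (((n+2-(i+1) : ℕ)) : ℝ) ^ (n+2-(i+1)-1))
        / (Nat.factorial (n+2)) := by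
    intro i hi
    have hi' : i < n + 1 := Finset.mem_range.mp hi
    have h1 : n + 2 - (i+1) = n + 1 - i := by omega
    have h2 : n + 2 - (i+1) - 1 = n - i := by omega
    rw [h1]
    obtain ⟨m, hm⟩ : ∃ m, n + 1 - i = m + 1 := ⟨n - i, by omega⟩
    rw [hm]
    simp only [Nat.add_sub_cancel]
    rw [tA_succ, tA_succ]
    have hfact : ((n+2).choose (i+1) : ℝ) * (Nat.factorial (i+1)) * (Nat.factorial (m+1))
        = Nat.factorial (n+2) := by
      have := Nat.choose_mul_factorial_mul_factorial (show i+1 ≤ n+2 by omega)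
      have hnk : n + 2 - (i+1) = m + 1 := by omega
      rw [hnk] at this
      exact_mod_cast congrArg (fun t : ℕ => (t:ℝ)) this
    have hf1 : (Nat.factorial (i+1) : ℝ) ≠ 0 := by positivity
    have hf2 : (Nat.factorial (m+1) : ℝ) ≠ 0 := by positivity
    have hf3 : (Nat.factorial (n+2) : ℝ) ≠ 0 := by positivity
    push_cast at hfact ⊢
    field_simp
    linear_combination (-(((i:ℝ)+1)*((1:ℝ)+(i:ℝ))^i)) * hfact
  rw [Finset.sum_congr rfl hterm, ← Finset.sum_div]
  have hrw : ∑ i ∈ range (n+1), (((n+2).choose (i+1) : ℝ) * ((i+1:ℕ):ℝ)^(i+1) * (((n+2-(i+1) : ℕ)) : ℝ) ^ (n+2-(i+1)-1))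
      = ((n:ℝ)+2)^(n+2) - ((n:ℝ)+2)^(n+1) := by
    have : (((n+2):ℕ):ℝ)^(n+2) = ((n:ℝ)+2)^(n+2) := by push_cast; ring
    linarith [hkey, this]
  rw [hrw]
  rw [tA_succ]
  have hf3 : (Nat.factorial (n+2) : ℝ) ≠ 0 := by positivity
  field_simp
  push_cast
  ring

lemma coeff_Tdot (m : ℕ) : coeff m Tdot = tA m := by simp [Tdot, tA]

noncomputable def gfun (n : ℕ) : ℝ :=
  ∑ k ∈ Finset.range (n+1), ((Nat.factorial k : ℝ))⁻¹ * coeff n (Tdot ^ k)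

lemma coeff_Tdot_pow_zero {m k : ℕ} (h : m < k) : coeff m (Tdot ^ k) = 0 := by
  have hX : (X : PowerSeries ℝ) ∣ Tdot := X_dvd_iff.mpr (by simp [Tdot])
  exact (X_pow_dvd_iff.mp (pow_dvd_pow_of_dvd hX k)) m h

noncomputable def FF (M : ℕ) : PowerSeries ℝ :=
  ∑ k ∈ Finset.range M, ((Nat.factorial k : ℝ))⁻¹ • Tdot ^ k

lemma coeff_FF {n M : ℕ} (h : n < M) : coeff n (FF M) = gfun n := by
  rw [FF, map_sum, gfun]
  rw [← Finset.sum_subset (Finset.range_subset_range.mpr h)]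
  · apply Finset.sum_congr rfl
    intro k _
    rw [map_smul, smul_eq_mul]
  · intro k _ hk
    have hk' : n < k := by
      simp only [Finset.mem_range, not_lt] at hk
      omega
    rw [map_smul, smul_eq_mul, coeff_Tdot_pow_zero hk', mul_zero]

lemma coeff_PSComp_exp (n : ℕ) : coeff n (PSComp (exp ℝ) Tdot) = gfun n := by
  rw [PSComp, coeff_mk, gfun]
  apply Finset.sum_congr rfl
  intro k _
  congr 1
  rw [coeff_exp]
  rw [one_div]
  rw [map_inv₀]
  norm_num


lemma fact_inv_succ (i : ℕ) :
    ((Nat.factorial (i+1) : ℝ))⁻¹ * ((i:ℝ)+1) = ((Nat.factorial i : ℝ))⁻¹ := by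
  rw [Nat.factorial_succ]
  have h1 : (Nat.factorial i : ℝ) ≠ 0 := by positivity
  have h2 : ((i:ℝ)+1) ≠ 0 := by positivity
  push_cast
  field_simp

lemma deriv_FF (n : ℕ) : (d⁄dX ℝ) (FF (n+2)) = (d⁄dX ℝ) Tdot * FF (n+1) := by
  rw [FF, map_sum]
  have hterm : ∀ k ∈ Finset.range (n+2), (d⁄dX ℝ) (((Nat.factorial k : ℝ))⁻¹ • Tdot ^ k)
      = ((Nat.factorial k : ℝ))⁻¹ • ((k : ℕ) • (Tdot ^ (k-1) * (d⁄dX ℝ) Tdot)) := by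
    intro k _
    rw [Derivation.map_smul, Derivation.leibniz_pow, smul_eq_mul]
  rw [Finset.sum_congr rfl hterm, Finset.sum_range_succ']
  simp only [zero_smul, smul_zero, add_zero, Nat.add_sub_cancel]
  have hterm2 : ∀ i ∈ Finset.range (n+1),
      ((Nat.factorial (i+1) : ℝ))⁻¹ • (((i+1) : ℕ) • (Tdot ^ i * (d⁄dX ℝ) Tdot))
      = ((Nat.factorial i : ℝ))⁻¹ • (Tdot ^ i * (d⁄dX ℝ) Tdot) := by
    intro i _
    rw [← Nat.cast_smul_eq_nsmul ℝ, smul_smul]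
    congr 1
    push_cast
    exact fact_inv_succ i
  rw [Finset.sum_congr rfl hterm2]
  rw [mul_comm, FF, Finset.sum_mul]
  apply Finset.sum_congr rfl
  intro i _
  rw [smul_mul_assoc]

lemma recg (n : ℕ) :
    ((n:ℝ)+1) * gfun (n+1) = ∑ i ∈ Finset.range (n+1), ((i:ℝ)+1) * tA (i+1) * gfun (n-i) := by
  have h1 : coeff n ((d⁄dX ℝ) (FF (n+2))) = gfun (n+1) * ((n:ℝ)+1) := by
    rw [coeff_derivative, coeff_FF (by omega)]
  have h2 : coeff n ((d⁄dX ℝ) Tdot * FF (n+1))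
      = ∑ i ∈ Finset.range (n+1), ((i:ℝ)+1) * tA (i+1) * gfun (n-i) := by
    rw [coeff_mul, Finset.Nat.sum_antidiagonal_eq_sum_range_succ_mk]
    apply Finset.sum_congr rfl
    intro i hi
    have hi' : i < n + 1 := Finset.mem_range.mp hi
    rw [coeff_derivative, coeff_Tdot, coeff_FF (show n - i < n + 1 by omega)]
    ring
  rw [← h2, ← deriv_FF n, h1]
  ring

lemma gA : ∀ n : ℕ, gfun n = tA (n+1) := by
  intro n
  induction n using Nat.strong_induction_on with
  | _ n ih =>
    match n with
    | 0 =>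
      rw [gfun]
      norm_num [tA]
    | (m+1) =>
      have h := recg m
      have hsum : ∑ i ∈ Finset.range (m+1), ((i:ℝ)+1) * tA (i+1) * gfun (m-i)
          = ∑ i ∈ Finset.range (m+1), ((i:ℝ)+1) * tA (i+1) * tA (m+1-i) := by
        apply Finset.sum_congr rfl
        intro i hi
        have hi' : i < m + 1 := Finset.mem_range.mp hi
        rw [ih (m-i) (by omega)]
        congr 2
        omega
      rw [hsum, ← recA m] at h
      have hne : ((m:ℝ)+1) ≠ 0 := by positivity
      exact mul_left_cancel₀ hne h

/-- `T^•(z) = z · exp(T^•(z))` as formal power series. -/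
theorem stmt_2 : Tdot = PowerSeries.X * PSComp (PowerSeries.exp ℝ) Tdot := by
  ext n
  rcases n with _ | n
  · simp [Tdot]
  · rw [PowerSeries.coeff_succ_X_mul, coeff_PSComp_exp, gA, coeff_Tdot]
end

section
/- Let T(z) = Σ_{n≥1} n^{n-2} z^n/n! be the exponential generating function of labelled trees. Then its derivative satisfies T'(z) = exp(z·T'(z)) as formal power series. -/
open Polynomial Finset

/-- Abel polynomial value: `A_m(x) = x (x+m)^(m-1)`, with `A_0 = 1`. -/
noncomputable def realAbel (x : ℝ) (m : ℕ) : ℝ :=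
  if m = 0 then 1 else x * (x + m) ^ (m - 1)

/-- `A_m(x + Y)` as a polynomial in `Y`. -/
noncomputable def abelL (m : ℕ) (x : ℝ) : Polynomial ℝ :=
  if m = 0 then 1 else (C x + X) * (C x + X + C (m : ℝ)) ^ (m - 1)

lemma abelL_comp (m : ℕ) (x : ℝ) : (abelL m x).comp (X + 1) = abelL m (x + 1) := by
  rcases m with _ | k
  · simp [abelL]
  · simp only [abelL, Nat.succ_ne_zero, if_false, mul_comp, pow_comp, add_comp, C_comp, X_comp,
      Nat.add_sub_cancel, Nat.cast_add, Nat.cast_one, map_add, map_one, one_comp]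
    ring

lemma abelL_eval (m : ℕ) (x y : ℝ) : (abelL m x).eval y = realAbel (x + y) m := by
  rcases m with _ | k
  · simp [abelL, realAbel]
  · simp [abelL, realAbel]

lemma abelL_derivative (m : ℕ) (x : ℝ) :
    derivative (abelL (m + 1) x) = C ((m : ℝ) + 1) * abelL m (x + 1) := by
  rcases m with _ | k
  · simp [abelL]
  · simp only [abelL, Nat.succ_ne_zero, if_false, Nat.add_sub_cancel, derivative_mul,
      derivative_pow, derivative_add, derivative_C, derivative_X, zero_add, add_zero,
      derivative_one, Nat.cast_add, Nat.cast_one, map_add, map_one]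
    ring

/-- The Abel polynomial `A_m(Y)`. -/
noncomputable def abelP (m : ℕ) : Polynomial ℝ := abelL m 0

lemma abelP_derivative (m : ℕ) :
    derivative (abelP (m + 1)) = C ((m : ℝ) + 1) * abelL m 1 := by
  rw [abelP, abelL_derivative, zero_add]

lemma abelP_eval (m : ℕ) (y : ℝ) : (abelP m).eval y = realAbel y m := by
  rw [abelP, abelL_eval, zero_add]

lemma realAbel_zero (m : ℕ) : realAbel 0 m = if m = 0 then 1 else 0 := by
  rcases m with _ | k <;> simp [realAbel]

lemma choose_cast_id (m j : ℕ) (h : j ≤ m) :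
    ((m + 1).choose j : ℝ) * ((m : ℝ) + 1 - j) = ((m : ℝ) + 1) * (m.choose j) := by
  have h1 : m.choose j * (m + 1) = (m + 1).choose j * (m + 1 - j) := Nat.choose_mul_succ_eq m j
  have h2 : ((m.choose j * (m + 1) : ℕ) : ℝ) = (((m + 1).choose j * (m + 1 - j) : ℕ) : ℝ) := by
    exact_mod_cast congrArg Nat.cast h1
  push_cast [Nat.cast_sub (le_trans h (Nat.le_succ m))] at h2
  linarith

theorem abelL_eq_sum (m : ℕ) : ∀ x : ℝ,
    abelL m x = ∑ j ∈ range (m + 1), C ((m.choose j : ℝ) * realAbel x j) * abelP (m - j) := by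
  induction m with
  | zero => intro x; simp [abelL, abelP, realAbel]
  | succ m ih =>
    intro x
    set S : Polynomial ℝ :=
      ∑ j ∈ range (m + 2), C (((m + 1).choose j : ℝ) * realAbel x j) * abelP (m + 1 - j) with hS
    have hd : derivative (abelL (m + 1) x) = derivative S := by
      have hlast : derivative (C (((m + 1).choose (m + 1) : ℝ) * realAbel x (m + 1))
          * abelP (m + 1 - (m + 1))) = 0 := by
        simp [abelP, abelL]
      rw [abelL_derivative, hS, Finset.sum_range_succ, derivative_add, hlast, add_zero, map_sum]
      have step : ∀ j ∈ range (m + 1),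
          derivative (C (((m + 1).choose j : ℝ) * realAbel x j) * abelP (m + 1 - j))
            = C ((m : ℝ) + 1) * (C ((m.choose j : ℝ) * realAbel x j) * abelL (m - j) 1) := by
        intro j hj
        have hjm : j ≤ m := Nat.lt_succ_iff.mp (Finset.mem_range.mp hj)
        have h1 : m + 1 - j = (m - j) + 1 := by omega
        rw [h1, derivative_mul, derivative_C, zero_mul, zero_add, abelP_derivative]
        have h2 : ((m - j : ℕ) : ℝ) + 1 = (m : ℝ) + 1 - j := by
          push_cast [Nat.cast_sub hjm]; ring
        rw [h2, ← mul_assoc, ← map_mul, ← mul_assoc, ← map_mul]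
        congr 2
        linear_combination realAbel x j * choose_cast_id m j hjm
      rw [Finset.sum_congr rfl step, ← Finset.mul_sum]
      congr 1
      have hc := congrArg (fun p => p.comp (X + 1)) (ih x)
      simp only [abelL_comp, Polynomial.add_comp, Polynomial.mul_comp, Polynomial.C_comp,
        Polynomial.sum_comp] at hc
      rw [hc]
      refine Finset.sum_congr rfl fun j hj => ?_
      rw [abelP, abelL_comp, zero_add]
    have he : (abelL (m + 1) x).eval 0 = S.eval 0 := by
      rw [abelL_eval, add_zero, hS, Polynomial.eval_finset_sum, Finset.sum_range_succ]
      have hz : ∀ j ∈ range (m + 1),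
          (C (((m + 1).choose j : ℝ) * realAbel x j) * abelP (m + 1 - j)).eval 0 = 0 := by
        intro j hj
        have hne : m + 1 - j ≠ 0 := by
          have := Finset.mem_range.mp hj; omega
        simp [abelP_eval, realAbel_zero, hne]
      rw [Finset.sum_congr rfl hz, Finset.sum_const_zero, zero_add]
      simp [abelP_eval, realAbel_zero]
    have hsub : derivative (abelL (m + 1) x - S) = 0 := by
      rw [derivative_sub, hd, sub_self]
    have hC := Polynomial.eq_C_of_derivative_eq_zero hsub
    have hc0 : (abelL (m + 1) x - S).coeff 0 = 0 := by
      rw [Polynomial.coeff_zero_eq_eval_zero, Polynomial.eval_sub, he, sub_self]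
    rw [hc0, map_zero] at hC
    exact sub_eq_zero.mp hC

theorem realAbel_binomial (x y : ℝ) (m : ℕ) :
    realAbel (x + y) m
      = ∑ j ∈ range (m + 1), (m.choose j : ℝ) * realAbel x j * realAbel y (m - j) := by
  have h := congrArg (Polynomial.eval y) (abelL_eq_sum m x)
  rw [abelL_eval, Polynomial.eval_finset_sum] at h
  simpa [abelP_eval, mul_assoc] using h

/-- The EGF of labelled trees, `T(z) = Σ_{n≥1} n^{n-2} z^n/n!`. -/
noncomputable def Ttree : PowerSeries ℝ :=
  PowerSeries.mk fun n => if n = 0 then 0 else (n : ℝ) ^ (n - 2) / (Nat.factorial n)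

lemma coeff_Tp (m : ℕ) :
    PowerSeries.coeff m (PowerSeries.derivativeFun Ttree)
      = realAbel 1 m / m.factorial := by
  rw [show PowerSeries.derivativeFun Ttree = PowerSeries.derivative ℝ Ttree from rfl,
    PowerSeries.coeff_derivativeFun]
  simp only [Ttree, PowerSeries.coeff_mk, Nat.succ_ne_zero, if_false]
  rcases m with _ | j
  · norm_num [realAbel]
  · have h1 : j + 1 + 1 - 2 = j + 1 - 1 := by omega
    rw [h1]
    simp only [realAbel, Nat.succ_ne_zero, if_false, Nat.factorial_succ, Nat.add_sub_cancel]
    have h2 : ((j:ℝ) + 1 + 1) = (1 + ((j:ℝ)+1)) := by ring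
    push_cast
    rw [h2]
    have hf : ((j+1 : ℕ).factorial : ℝ) ≠ 0 := by positivity
    field_simp

lemma coeff_TpPow : ∀ (k m : ℕ),
    PowerSeries.coeff m ((PowerSeries.derivativeFun Ttree) ^ k)
      = realAbel k m / m.factorial := by
  intro k
  induction k with
  | zero =>
    intro m
    rcases m with _ | j <;>
      simp [realAbel_zero, PowerSeries.coeff_one]
  | succ k ih =>
    intro m
    rw [pow_succ', PowerSeries.coeff_mul, Finset.Nat.sum_antidiagonal_eq_sum_range_succ_mk]
    have step : ∀ j ∈ range (m + 1),
        PowerSeries.coeff j (PowerSeries.derivativeFun Ttree)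
          * PowerSeries.coeff (m - j) ((PowerSeries.derivativeFun Ttree) ^ k)
        = (m.choose j : ℝ) * realAbel 1 j * realAbel k (m - j) / m.factorial := by
      intro j hj
      have hjm : j ≤ m := Nat.lt_succ_iff.mp (Finset.mem_range.mp hj)
      rw [coeff_Tp, ih]
      have hfac : (m.choose j : ℝ) * j.factorial * (m - j).factorial = m.factorial := by
        exact_mod_cast congrArg (Nat.cast (R := ℝ))
          (Nat.choose_mul_factorial_mul_factorial hjm)
      have h1 : (j.factorial : ℝ) ≠ 0 := by positivity
      have h2 : ((m - j).factorial : ℝ) ≠ 0 := by positivity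
      have h3 : (m.factorial : ℝ) ≠ 0 := by positivity
      rw [div_mul_div_comm, div_eq_div_iff (by positivity) h3]
      linear_combination (- realAbel 1 j * realAbel (k:ℝ) (m - j)) * hfac
    rw [Finset.sum_congr rfl step, ← Finset.sum_div]
    rw [← realAbel_binomial 1 k m]
    norm_num [add_comm (1:ℝ)]

lemma key_sum (n : ℕ) :
    ∑ k ∈ range (n + 1), (n.choose k : ℝ) * realAbel k (n - k) = realAbel 1 n := by
  rcases n with _ | m
  · simp [realAbel]
  · rw [Finset.sum_range_succ']
    have h0 : ((m + 1).choose 0 : ℝ) * realAbel (0 : ℕ) (m + 1 - 0) = 0 := by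
      simp [realAbel_zero]
    rw [h0, add_zero]
    have step : ∀ i ∈ range (m + 1),
        (((m + 1).choose (i + 1) : ℝ)) * realAbel (↑(i + 1)) (m + 1 - (i + 1))
          = (1 : ℝ) ^ i * ((m : ℝ) + 1) ^ (m - i) * (m.choose i : ℝ) := by
      intro i hi
      have him : i ≤ m := Nat.lt_succ_iff.mp (Finset.mem_range.mp hi)
      have hred : m + 1 - (i + 1) = m - i := by omega
      rw [hred]
      rcases eq_or_lt_of_le him with heq | hlt
      · subst heq
        simp [realAbel]
      · have hne : m - i ≠ 0 := by omega
        have hcast : ((i + 1 : ℕ) : ℝ) + ((m - i : ℕ) : ℝ) = (m : ℝ) + 1 := by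
          push_cast [Nat.cast_sub him]; ring
        rw [realAbel, if_neg hne]
        push_cast
        rw [show ((i : ℝ) + 1 + ↑(m - i)) = (m : ℝ) + 1 by
          push_cast [Nat.cast_sub him]; ring]
        have hpow : ((m : ℝ) + 1) ^ (m - i) = ((m : ℝ) + 1) * ((m : ℝ) + 1) ^ (m - i - 1) := by
          rw [← pow_succ']
          congr 1
          omega
        have hch : ((m + 1).choose (i + 1) : ℝ) * ((i : ℝ) + 1)
            = ((m : ℝ) + 1) * (m.choose i : ℝ) := by
          have := Nat.add_one_mul_choose_eq m i
          exact_mod_cast congrArg (Nat.cast (R := ℝ)) this.symm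
        rw [hpow]
        calc ((m + 1).choose (i + 1) : ℝ) * (((i : ℝ) + 1) * ((m : ℝ) + 1) ^ (m - i - 1))
            = (((m + 1).choose (i + 1) : ℝ) * ((i : ℝ) + 1)) * ((m : ℝ) + 1) ^ (m - i - 1) := by
              ring
          _ = ((m : ℝ) + 1) * (m.choose i : ℝ) * ((m : ℝ) + 1) ^ (m - i - 1) := by rw [hch]
          _ = (1 : ℝ) ^ i * (((m : ℝ) + 1) * ((m : ℝ) + 1) ^ (m - i - 1)) * (m.choose i : ℝ) := by
              ring
    rw [Finset.sum_congr rfl step, ← add_pow]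
    simp only [realAbel, Nat.succ_ne_zero, if_false, Nat.add_sub_cancel]
    push_cast
    ring

/-- `T'(z) = exp(z·T'(z))` as formal power series. -/
theorem stmt_5 :
    PowerSeries.derivativeFun Ttree
      = PSComp (PowerSeries.exp ℝ) (PowerSeries.X * PowerSeries.derivativeFun Ttree) := by
  ext n
  rw [coeff_Tp, PSComp, PowerSeries.coeff_mk]
  have step : ∀ k ∈ range (n + 1),
      PowerSeries.coeff k (PowerSeries.exp ℝ)
        * PowerSeries.coeff n ((PowerSeries.X * PowerSeries.derivativeFun Ttree) ^ k)
      = (n.choose k : ℝ) * realAbel k (n - k) / n.factorial := by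
    intro k hk
    have hkn : k ≤ n := Nat.lt_succ_iff.mp (Finset.mem_range.mp hk)
    have hexp : PowerSeries.coeff k (PowerSeries.exp ℝ) = 1 / (k.factorial : ℝ) := by
      rw [PowerSeries.coeff_exp]
      push_cast
      simp
    have hXpow : PowerSeries.coeff n
        ((PowerSeries.X * PowerSeries.derivativeFun Ttree) ^ k)
        = realAbel k (n - k) / (n - k).factorial := by
      rw [mul_pow, show n = (n - k) + k by omega, PowerSeries.coeff_X_pow_mul, coeff_TpPow, Nat.add_sub_cancel]
    rw [hexp, hXpow]
    have hfac : (n.choose k : ℝ) * k.factorial * (n - k).factorial = n.factorial := by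
      exact_mod_cast congrArg (Nat.cast (R := ℝ)) (Nat.choose_mul_factorial_mul_factorial hkn)
    have h1 : (k.factorial : ℝ) ≠ 0 := by positivity
    have h2 : ((n - k).factorial : ℝ) ≠ 0 := by positivity
    have h3 : (n.factorial : ℝ) ≠ 0 := by positivity
    rw [div_mul_div_comm, one_mul, div_eq_div_iff (by positivity) h3]
    linear_combination (- realAbel (k:ℝ) (n - k)) * hfac
  rw [Finset.sum_congr rfl step, ← Finset.sum_div, key_sum]
end

section
/- Let T(z) = Σ_{n≥1} n^{n-2} z^n/n!. Then the second derivative satisfies T''(z)·(1 − z·T'(z)) = (T'(z))^2 as formal power series. -/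
open Finset Polynomial

lemma fd_eval (p : ℝ[X]) :
    fwdDiff 1 (fun k : ℕ => p.eval (k : ℝ)) = fun k : ℕ => (p.comp (X + C 1) - p).eval (k : ℝ) := by
  funext k
  simp [fwdDiff, eval_comp]

lemma natDegree_shift_sub_lt (p : ℝ[X]) (hp : p.natDegree ≠ 0) :
    (p.comp (X + C 1) - p).natDegree < p.natDegree := by
  have hp0 : p ≠ 0 := fun h => hp (by simp [h])
  have hX : (X + C (1:ℝ)).natDegree = 1 := natDegree_X_add_C (1:ℝ)
  have hlc : (p.comp (X + C 1)).leadingCoeff = p.leadingCoeff := by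
    rw [leadingCoeff_comp (by rw [hX]; exact one_ne_zero)]
    rw [(monic_X_add_C (1:ℝ)).leadingCoeff, one_pow, mul_one]
  have hq0 : p.comp (X + C 1) ≠ 0 := by
    intro h
    rw [h, leadingCoeff_zero] at hlc
    exact hp0 (leadingCoeff_eq_zero.mp hlc.symm)
  have hd : (p.comp (X + C 1)).degree = p.degree := by
    rw [degree_eq_natDegree hp0, degree_eq_natDegree hq0, natDegree_comp, hX, mul_one]
  have := degree_sub_lt hd hq0 hlc
  by_cases hz : p.comp (X + C 1) - p = 0
  · rw [hz]; simpa [natDegree_zero] using Nat.pos_of_ne_zero hp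
  · have h2 := natDegree_lt_natDegree hz (hd ▸ this)
    exact h2

lemma fd_iter_zero (n : ℕ) : (fwdDiff (1:ℕ))^[n] (fun _ : ℕ => (0:ℝ)) = fun _ => (0:ℝ) := by
  induction n with
  | zero => rfl
  | succ m IHm =>
    rw [Function.iterate_succ_apply,
      show fwdDiff (1:ℕ) (fun _ : ℕ => (0:ℝ)) = fun _ => (0:ℝ) from funext fun _ => sub_self 0]
    exact IHm

lemma fd_iter_poly_zero : ∀ (n : ℕ) (p : ℝ[X]), p.natDegree < n →
    (fwdDiff (1:ℕ))^[n] (fun k : ℕ => p.eval (k : ℝ)) = fun _ => (0:ℝ) := by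
  intro n
  induction n with
  | zero => intro p hp; omega
  | succ n IH =>
    intro p hp
    rw [Function.iterate_succ_apply, fd_eval]
    by_cases h0 : p.natDegree = 0
    · obtain ⟨c, rfl⟩ := natDegree_eq_zero.mp h0
      have : (C c).comp (X + C 1) - C c = 0 := by simp
      rw [this]
      simpa using fd_iter_zero n
    · exact IH _ (lt_of_lt_of_le (natDegree_shift_sub_lt p h0) (by omega))

lemma alt_sum_poly (n : ℕ) (p : ℝ[X]) (hp : p.natDegree < n) :
    ∑ k ∈ range (n + 1), ((-1 : ℝ) ^ (n - k) * (n.choose k : ℝ)) * p.eval (k : ℝ) = 0 := by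
  have := fwdDiff_iter_eq_sum_shift (1:ℕ) (fun k : ℕ => p.eval (k : ℝ)) n 0
  rw [fd_iter_poly_zero n p hp] at this
  simp only [zero_add, smul_eq_mul, mul_one] at this
  calc ∑ k ∈ range (n + 1), ((-1 : ℝ) ^ (n - k) * (n.choose k : ℝ)) * p.eval (k : ℝ)
      = ∑ k ∈ range (n + 1), ((-1:ℤ) ^ (n - k) * (n.choose k : ℤ)) • p.eval (k : ℝ) := by
        apply Finset.sum_congr rfl; intro k hk; rw [zsmul_eq_mul]; push_cast; ring
    _ = 0 := this.symm

lemma poly_ext_of_deriv (p q : ℝ[X]) (h : derivative p = derivative q) (a : ℝ)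
    (he : p.eval a = q.eval a) : p = q := by
  have h0 : derivative (p - q) = 0 := by rw [map_sub, h, sub_self]
  have hc := eq_C_of_derivative_eq_zero h0
  have : p.eval a - q.eval a = (p - q).coeff 0 := by rw [← eval_sub, hc]; simp
  rw [he, sub_self] at this
  have : p - q = 0 := by rw [hc, ← this]; simp
  linear_combination (norm := ring_nf) this

lemma abelPoly : ∀ n : ℕ, ∑ k ∈ range (n+1),
      C ((n.choose k : ℝ) * ((k:ℝ)+1)^(k-1)) * (X + C (((n-k : ℕ)):ℝ))^(n-k)
    = (X + C ((n:ℝ)+1))^n := by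
  intro n
  induction n with
  | zero => simp
  | succ n IH =>
    apply poly_ext_of_deriv _ _ ?hd (-((n:ℝ)+2)) ?he
    case hd =>
      have IH' := congrArg (fun p => p.comp (X + C (1:ℝ))) IH
      simp only [Polynomial.sum_comp, mul_comp, C_comp, pow_comp, add_comp, X_comp] at IH'
      rw [map_sum, Finset.sum_range_succ, show (n+1)-(n+1) = 0 from by omega,
        pow_zero, mul_one, derivative_C, add_zero]
      have hR : derivative ((X + C ((((n+1:ℕ)):ℝ) + 1)) ^ (n + 1))
          = C ((n:ℝ)+1) * (X + C (1:ℝ) + C ((n:ℝ) + 1)) ^ n := by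
        rw [derivative_pow, derivative_add, derivative_X, derivative_C, add_zero, mul_one,
          Nat.add_sub_cancel]
        congr 2
        · push_cast; ring
        · rw [add_assoc, ← C_add, add_comm (1:ℝ)]
          congr 2
          push_cast; ring
      push_cast at hR ⊢
      rw [hR, ← IH', Finset.mul_sum]
      apply Finset.sum_congr rfl
      intro k hk
      have hkn : k ≤ n := by simpa [Nat.lt_succ_iff] using hk
      rw [derivative_C_mul, derivative_pow]
      simp only [derivative_add, derivative_X, derivative_C, add_zero, mul_one]
      have e1 : (n + 1 - k) - 1 = n - k := by omega
      have e2 : ((n + 1 - k : ℕ) : ℝ) = ((n - k : ℕ) : ℝ) + 1 := by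
        push_cast [Nat.cast_sub (by omega : k ≤ n + 1), Nat.cast_sub hkn]; ring
      have e3 : (((n+1).choose k : ℝ)) * ((n + 1 - k : ℕ) : ℝ) = ((n:ℝ)+1) * (n.choose k : ℝ) := by
        have h := Nat.choose_mul_succ_eq n k
        have h2 : ((n.choose k * (n + 1) : ℕ) : ℝ) = (((n + 1).choose k * (n + 1 - k) : ℕ) : ℝ) := by
          exact_mod_cast congrArg (Nat.cast : ℕ → ℝ) h
        push_cast [Nat.cast_sub (by omega : k ≤ n + 1)] at h2 ⊢
        linarith [h2]
      have e5 : (((n+1).choose k : ℝ) * ((k:ℝ)+1)^(k-1)) * (((n - k : ℕ) : ℝ) + 1)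
          = ((n:ℝ)+1) * ((n.choose k : ℝ) * ((k:ℝ)+1)^(k-1)) := by
        rw [← e2]; linear_combination (((k:ℝ)+1)^(k-1)) * e3
      have e4 : X + C (1:ℝ) + C ((n-k:ℕ):ℝ) = X + C (((n-k:ℕ):ℝ)+1) := by
        rw [add_assoc, ← C_add, add_comm (1:ℝ)]
      rw [e1, e2, e4, ← mul_assoc, ← mul_assoc, ← C_mul, ← C_mul, e5]
    case he =>
      have hp : ((X + C (1:ℝ))^n).natDegree < n + 1 := by
        rw [natDegree_pow, natDegree_X_add_C, mul_one]; omega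
      have h0 := alt_sum_poly (n+1) ((X + C (1:ℝ))^n) hp
      simp only [eval_pow, eval_add, eval_X, eval_C] at h0
      rw [eval_finset_sum]
      have hRHS : eval (-((n:ℝ)+2)) ((X + C (((n+1:ℕ):ℝ)+1))^(n+1)) = 0 := by
        rw [eval_pow, eval_add, eval_X, eval_C,
          show -((n:ℝ)+2) + (((n+1:ℕ):ℝ)+1) = 0 from by push_cast; ring,
          zero_pow (by omega : n+1 ≠ 0)]
      push_cast at hRHS ⊢
      rw [hRHS, ← h0]
      apply Finset.sum_congr rfl
      intro k hk
      have hk2 : k ≤ n + 1 := by simpa [Nat.lt_succ_iff] using hk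
      rw [eval_mul, eval_C, eval_pow, eval_add, eval_X, eval_C]
      have hb : ((n+1-k:ℕ):ℝ) = (n:ℝ)+1-(k:ℝ) := by push_cast [Nat.cast_sub hk2]; ring
      push_cast [hb]
      rw [show -((n:ℝ)+2) + ((n:ℝ)+1-(k:ℝ)) = -((k:ℝ)+1) from by ring]
      rw [show (-((k:ℝ)+1))^(n+1-k) = (-1)^(n+1-k) * ((k:ℝ)+1)^(n+1-k) from neg_pow _ _]
      have hcomb : ((k:ℝ)+1)^(k-1) * ((k:ℝ)+1)^(n+1-k) = ((k:ℝ)+1)^n := by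
        rcases k with _ | k
        · norm_num
        · rw [← pow_add]; congr 1; omega
      linear_combination (norm := ring_nf) ((((n+1).choose k : ℕ) : ℝ) * (-1:ℝ)^(n+1-k)) * hcomb

lemma abel_real (n : ℕ) :
    ∑ k ∈ range (n+1), (n.choose k : ℝ) * ((k:ℝ)+1)^(k-1) * (((n-k:ℕ):ℝ)+1)^(n-k)
      = ((n:ℝ)+2)^n := by
  have h := congrArg (Polynomial.eval (1:ℝ)) (abelPoly n)
  rw [eval_finset_sum, eval_pow, eval_add, eval_X, eval_C] at h
  rw [show (1:ℝ) + ((n:ℝ)+1) = (n:ℝ)+2 from by ring] at h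
  rw [← h]
  apply Finset.sum_congr rfl
  intro k hk
  rw [eval_mul, eval_C, eval_pow, eval_add, eval_X, eval_C, add_comm (1:ℝ), mul_assoc]

/-- coefficient of `z^n` in `T'`. -/
noncomputable def aT (n : ℕ) : ℝ := ((n:ℝ)+1)^(n-1) / (Nat.factorial n)
/-- coefficient of `z^n` in `T''`. -/
noncomputable def bT (n : ℕ) : ℝ := ((n:ℝ)+2)^n / (Nat.factorial n)

lemma bT_add_aT (m : ℕ) : bT m + aT (m+1) = ((m:ℝ)+2)^(m+1) / (Nat.factorial (m+1)) := by
  unfold aT bT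
  have hf : ((Nat.factorial (m+1) : ℕ) : ℝ) = ((m:ℝ)+1) * (Nat.factorial m : ℝ) := by
    rw [Nat.factorial_succ]; push_cast; ring
  rw [Nat.add_sub_cancel, hf]
  have h1 : (Nat.factorial m : ℝ) ≠ 0 := by positivity
  have h2 : ((m:ℝ)+1) ≠ 0 := by positivity
  push_cast
  field_simp
  ring

lemma term_key (n k : ℕ) (hk : k ≤ n) :
    (((n+1).choose k : ℝ) * ((k:ℝ)+1)^(k-1) * (((n+1-k:ℕ):ℝ)+1)^(n+1-k))
        / (Nat.factorial (n+1))
      = bT (n-k) * aT k + aT k * aT (n+1-k) := by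
  have hm : n + 1 - k = (n - k) + 1 := by omega
  rw [hm, mul_comm (bT (n-k)) (aT k), ← mul_add, bT_add_aT]
  have hcast : (((n-k)+1:ℕ):ℝ) = ((n-k:ℕ):ℝ) + 1 := by push_cast; ring
  rw [hcast]
  rw [Nat.cast_choose ℝ (by omega : k ≤ n + 1), hm]
  unfold aT
  have h1 : (Nat.factorial k : ℝ) ≠ 0 := by positivity
  have h2 : (Nat.factorial ((n-k)+1) : ℝ) ≠ 0 := by positivity
  have h3 : (Nat.factorial (n+1) : ℝ) ≠ 0 := by positivity
  field_simp
  ring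

lemma key (n : ℕ) :
    bT (n+1) = (∑ k ∈ range (n+1), bT k * aT (n-k)) + ∑ k ∈ range (n+2), aT k * aT (n+1-k) := by
  have habel := abel_real (n+1)
  have hb : bT (n+1) = ∑ k ∈ range (n+2),
      (((n+1).choose k : ℝ) * ((k:ℝ)+1)^(k-1) * (((n+1-k:ℕ):ℝ)+1)^(n+1-k))
        / (Nat.factorial (n+1)) := by
    rw [← Finset.sum_div]
    unfold bT
    rw [show (n+1+1) = n+2 from rfl] at habel
    rw [habel]
  rw [hb, Finset.sum_range_succ, Finset.sum_range_succ (fun k => aT k * aT (n+1-k)) (n+1)]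
  have hlast : (((n+1).choose (n+1) : ℝ) * (((n+1:ℕ):ℝ)+1)^((n+1)-1)
        * (((n+1-(n+1):ℕ):ℝ)+1)^(n+1-(n+1))) / (Nat.factorial (n+1))
      = aT (n+1) * aT (n+1-(n+1)) := by
    rw [Nat.choose_self, Nat.sub_self]
    unfold aT
    norm_num
  rw [hlast]
  rw [← Finset.sum_range_reflect (fun k => bT k * aT (n-k)) (n+1)]
  have hsum : ∑ k ∈ range (n+1),
      (((n+1).choose k : ℝ) * ((k:ℝ)+1)^(k-1) * (((n+1-k:ℕ):ℝ)+1)^(n+1-k))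
        / (Nat.factorial (n+1))
      = ∑ k ∈ range (n+1),
        (bT (n+1-1-k) * aT (n-(n+1-1-k)) + aT k * aT (n+1-k)) := by
    apply Finset.sum_congr rfl
    intro k hk
    have hkn : k ≤ n := by simpa [Nat.lt_succ_iff] using hk
    rw [show n+1-1-k = n-k from by omega, show n-(n-k) = k from by omega]
    exact term_key n k hkn
  rw [hsum, Finset.sum_add_distrib]
  ring

open PowerSeries

lemma coeff_derivativeFun (f : PowerSeries ℝ) (n : ℕ) :
    (PowerSeries.coeff n) (derivativeFun f) = PowerSeries.coeff (n + 1) f * (n + 1) :=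
  coeff_derivative f n

lemma coeff_deriv_T (n : ℕ) : (PowerSeries.coeff n) (derivativeFun Ttree) = aT n := by
  rw [coeff_derivativeFun]
  unfold Ttree aT
  rw [PowerSeries.coeff_mk, if_neg (Nat.succ_ne_zero n), show (n+1)-2 = n-1 from by omega]
  have hf : ((n+1).factorial : ℝ) = ((n:ℝ)+1) * (n.factorial : ℝ) := by
    rw [Nat.factorial_succ]; push_cast; ring
  rw [hf]
  have h1 : (Nat.factorial n : ℝ) ≠ 0 := by positivity
  have h2 : ((n:ℝ)+1) ≠ 0 := by positivity
  push_cast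
  field_simp

lemma coeff_deriv2_T (n : ℕ) :
    (PowerSeries.coeff n) (derivativeFun (derivativeFun Ttree)) = bT n := by
  rw [coeff_derivativeFun, coeff_deriv_T]
  unfold aT bT
  rw [show (n+1)-1 = n from by omega]
  have hf : ((n+1).factorial : ℝ) = ((n:ℝ)+1) * (n.factorial : ℝ) := by
    rw [Nat.factorial_succ]; push_cast; ring
  rw [hf]
  have h1 : (Nat.factorial n : ℝ) ≠ 0 := by positivity
  have h2 : ((n:ℝ)+1) ≠ 0 := by positivity
  push_cast
  field_simp
  ring

/-- `T''(z)·(1 − z·T'(z)) = (T'(z))²` as formal power series. -/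
theorem stmt_6 :
    PowerSeries.derivativeFun (PowerSeries.derivativeFun Ttree) *
        (1 - PowerSeries.X * PowerSeries.derivativeFun Ttree)
      = (PowerSeries.derivativeFun Ttree) ^ 2 := by
  have hre : ∀ T' T'' : PowerSeries ℝ,
      T'' * (1 - PowerSeries.X * T') = T'' - PowerSeries.X * (T'' * T') := by
    intro T' T''; ring
  rw [hre _ _, sq]
  ext n
  rw [map_sub]
  rcases n with _ | n
  · rw [coeff_zero_X_mul, sub_zero, coeff_deriv2_T, PowerSeries.coeff_mul]
    rw [Finset.Nat.sum_antidiagonal_eq_sum_range_succ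
      (fun i j => (PowerSeries.coeff i) (PowerSeries.derivativeFun Ttree) * (PowerSeries.coeff j) (PowerSeries.derivativeFun Ttree))]
    simp only [coeff_deriv_T]
    unfold bT aT
    norm_num
  · rw [coeff_succ_X_mul]
    rw [coeff_deriv2_T, PowerSeries.coeff_mul, PowerSeries.coeff_mul]
    rw [Finset.Nat.sum_antidiagonal_eq_sum_range_succ
      (fun i j => (PowerSeries.coeff i) (PowerSeries.derivativeFun (PowerSeries.derivativeFun Ttree)) * (PowerSeries.coeff j) (PowerSeries.derivativeFun Ttree))]
    rw [Finset.Nat.sum_antidiagonal_eq_sum_range_succ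
      (fun i j => (PowerSeries.coeff i) (PowerSeries.derivativeFun Ttree) * (PowerSeries.coeff j) (PowerSeries.derivativeFun Ttree))]
    simp only [coeff_deriv_T, coeff_deriv2_T]
    rw [key n]
    ring
end

section
/- Define T_1(z) = z + Σ_{n≥1} n^n z^{n+1}/(n+1)!. Then T_1(z)/(1 − T_1(z)) = T'(z) − 1 as formal power series, where T(z) = Σ_{n≥1} n^{n-2} z^n/n!. -/
open PowerSeries

/-- `T_1(z) = z + Σ_{n≥1} n^n z^{n+1}/(n+1)!`, i.e. coefficient of `z^m` (m ≥ 1)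
is `(m-1)^{m-1}/m!` (with `0^0 = 1`). -/
noncomputable def Tone : PowerSeries ℝ :=
  PowerSeries.mk fun n => if n = 0 then 0 else ((n : ℝ) - 1) ^ (n - 1) / (Nat.factorial n)

lemma alt_sum_pow : ∀ (n : ℕ), 0 < n → ∀ j < n,
    ∑ k ∈ Finset.range (n+1), (-1:ℝ)^k * (n.choose k) * (k:ℝ)^j = 0 := by
  intro n
  induction n using Nat.strong_induction_on with
  | _ n IH =>
    intro hn j hj
    rcases Nat.eq_zero_or_pos j with rfl | hj0
    · have h := add_pow (-1 : ℝ) 1 n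
      simp only [one_pow, mul_one, neg_add_cancel] at h
      rw [zero_pow hn.ne'] at h
      simpa using h.symm
    · obtain ⟨m, rfl⟩ : ∃ m, n = m + 1 := ⟨n - 1, (Nat.succ_pred_eq_of_pos hn).symm⟩
      obtain ⟨i, rfl⟩ : ∃ i, j = i + 1 := ⟨j - 1, (Nat.succ_pred_eq_of_pos hj0).symm⟩
      rw [Finset.sum_range_succ']
      have h0 : (-1:ℝ)^0 * (((m+1).choose 0 : ℕ):ℝ) * ((0:ℕ):ℝ)^(i+1) = 0 := by simp
      rw [h0, add_zero]
      have key : ∀ l, (-1:ℝ)^(l+1) * (((m+1).choose (l+1) : ℕ):ℝ) * ((l+1:ℕ):ℝ)^(i+1)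
          = -((m+1:ℝ)) * ((-1:ℝ)^l * (m.choose l : ℝ) * ((l+1:ℕ):ℝ)^i) := by
        intro l
        have hc : (((m+1).choose (l+1) : ℕ):ℝ) * ((l+1:ℕ):ℝ) = (m+1:ℝ) * (m.choose l : ℝ) := by
          exact_mod_cast congrArg (Nat.cast : ℕ → ℝ) (Nat.add_one_mul_choose_eq m l).symm
        linear_combination (-(-1:ℝ)^l * ((l+1:ℕ):ℝ)^i) * hc
      simp only [key]
      rw [← Finset.mul_sum]
      -- expand (l+1)^i via add_pow and swap sums
      have expand : ∀ l : ℕ, ((l+1:ℕ):ℝ)^i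
          = ∑ t ∈ Finset.range (i+1), (i.choose t : ℝ) * (l:ℝ)^t := by
        intro l
        have h := add_pow (l:ℝ) 1 i
        push_cast
        rw [h]
        exact Finset.sum_congr rfl fun t _ => by ring
      have : ∑ l ∈ Finset.range (m+1), (-1:ℝ)^l * (m.choose l : ℝ) * ((l+1:ℕ):ℝ)^i = 0 := by
        have hswap : ∑ l ∈ Finset.range (m+1), (-1:ℝ)^l * (m.choose l : ℝ) * ((l+1:ℕ):ℝ)^i
            = ∑ t ∈ Finset.range (i+1), (i.choose t : ℝ) *
                (∑ l ∈ Finset.range (m+1), (-1:ℝ)^l * (m.choose l : ℝ) * (l:ℝ)^t) := by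
          simp only [expand, Finset.mul_sum, Finset.sum_comm (s := Finset.range (m+1))]
          exact Finset.sum_congr rfl fun t _ => Finset.sum_congr rfl fun l _ => by ring
        rw [hswap]
        refine Finset.sum_eq_zero fun t ht => ?_
        have hm : 0 < m := by omega
        have htm : t < m := by
          have := Finset.mem_range.mp ht; omega
        rw [IH m (by omega) hm t htm, mul_zero]
      rw [this, mul_zero]

lemma alt_sum_shift (n m : ℕ) (h : m < n) (x : ℝ) :
    ∑ k ∈ Finset.range (n+1), (-1:ℝ)^k * (n.choose k) * (x + k)^m = 0 := by
  have expand : ∀ k : ℕ, (x + (k:ℝ))^m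
      = ∑ t ∈ Finset.range (m+1), (m.choose t : ℝ) * x^(m-t) * (k:ℝ)^t := by
    intro k
    rw [add_comm x (k:ℝ), add_pow]
    exact Finset.sum_congr rfl fun t _ => by ring
  have hswap : ∑ k ∈ Finset.range (n+1), (-1:ℝ)^k * (n.choose k) * (x + k)^m
      = ∑ t ∈ Finset.range (m+1), (m.choose t : ℝ) * x^(m-t) *
          (∑ k ∈ Finset.range (n+1), (-1:ℝ)^k * (n.choose k) * (k:ℝ)^t) := by
    simp only [expand, Finset.mul_sum, Finset.sum_comm (s := Finset.range (n+1))]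
    exact Finset.sum_congr rfl fun t _ => Finset.sum_congr rfl fun k _ => by ring
  rw [hswap]
  refine Finset.sum_eq_zero fun t ht => ?_
  have htn : t < n := by have := Finset.mem_range.mp ht; omega
  rw [alt_sum_pow n (by omega) t htn, mul_zero]

noncomputable def fAb (x : ℝ) (k : ℕ) : ℝ := if k = 0 then 1 else x * (x + k) ^ (k - 1)

lemma choose_mul_sub (n k : ℕ) (hk : k ≤ n) :
    (n+1).choose k * (n+1-k) = (n+1) * n.choose k := by
  have h1 := Nat.add_one_mul_choose_eq n (n - k)
  rw [Nat.choose_symm hk] at h1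
  rw [show n - k + 1 = n + 1 - k by omega] at h1
  rw [Nat.choose_symm (show k ≤ n + 1 by omega)] at h1
  exact h1.symm

lemma abelI : ∀ (n : ℕ) (x y : ℝ),
    ∑ k ∈ Finset.range (n+1), (n.choose k : ℝ) * fAb x k * (y + ((n - k : ℕ):ℝ)) ^ (n - k)
      = (x + y + n)^n := by
  intro n
  induction n with
  | zero => intro x y; simp [fAb]
  | succ n IH =>
    intro x y
    set N := n + 1 with hN
    let p : Polynomial ℝ := ∑ k ∈ Finset.range (N+1),
        Polynomial.C ((N.choose k : ℝ) * fAb x k) *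
          (Polynomial.X + Polynomial.C ((N - k : ℕ):ℝ)) ^ (N - k)
    let q : Polynomial ℝ := (Polynomial.X + Polynomial.C (x + N)) ^ N
    have hevalp : ∀ z : ℝ, p.eval z = ∑ k ∈ Finset.range (N+1),
        (N.choose k : ℝ) * fAb x k * (z + ((N - k : ℕ):ℝ)) ^ (N - k) := by
      intro z
      simp [p, Polynomial.eval_finset_sum]
    have hevalq : ∀ z : ℝ, q.eval z = (z + (x + N))^N := by intro z; simp [q]
    have hdp : Polynomial.derivative p = ∑ k ∈ Finset.range (N+1),
        Polynomial.C ((N.choose k : ℝ) * fAb x k) * (((N - k : ℕ) : Polynomial ℝ) *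
          (Polynomial.X + Polynomial.C ((N - k : ℕ):ℝ)) ^ (N - k - 1)) := by
      rw [map_sum]
      refine Finset.sum_congr rfl fun k _ => ?_
      rw [Polynomial.derivative_mul, Polynomial.derivative_C, zero_mul, zero_add,
        Polynomial.derivative_pow]
      simp [mul_assoc]
    have hdq : Polynomial.derivative q = (N : Polynomial ℝ) *
        (Polynomial.X + Polynomial.C (x + N)) ^ n := by
      rw [Polynomial.derivative_pow]
      simp [q, hN]
    have hder : Polynomial.derivative p = Polynomial.derivative q := by
      apply Polynomial.funext
      intro z
      rw [hdp, hdq]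
      have hL : Polynomial.eval z (∑ k ∈ Finset.range (N+1),
          Polynomial.C ((N.choose k : ℝ) * fAb x k) * (((N - k : ℕ) : Polynomial ℝ) *
            (Polynomial.X + Polynomial.C ((N - k : ℕ):ℝ)) ^ (N - k - 1)))
          = ∑ k ∈ Finset.range (N+1),
            (N.choose k : ℝ) * fAb x k * (((N - k : ℕ):ℝ) *
              (z + ((N - k : ℕ):ℝ)) ^ (N - k - 1)) := by
        simp [Polynomial.eval_finset_sum]
      rw [hL]
      rw [Finset.sum_range_succ]
      simp only [Nat.sub_self, Nat.cast_zero, zero_mul, mul_zero, add_zero]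
      have hterm : ∀ k ∈ Finset.range N, (N.choose k : ℝ) * fAb x k * (((N - k : ℕ):ℝ) *
            (z + ((N - k : ℕ):ℝ)) ^ (N - k - 1))
          = (N:ℝ) * ((n.choose k : ℝ) * fAb x k * ((z+1) + ((n - k : ℕ):ℝ)) ^ (n - k)) := by
        intro k hk
        have hkn : k ≤ n := by have := Finset.mem_range.mp hk; omega
        have h1 : ((N.choose k : ℕ):ℝ) * ((N - k : ℕ):ℝ) = (N:ℝ) * ((n.choose k : ℕ):ℝ) := by
          exact_mod_cast congrArg (Nat.cast : ℕ → ℝ) (choose_mul_sub n k hkn)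
        have h2 : ((N - k : ℕ):ℝ) = ((n - k : ℕ):ℝ) + 1 := by
          have : N - k = (n - k) + 1 := by omega
          rw [this]; push_cast; ring
        have h3 : N - k - 1 = n - k := by omega
        rw [h3, h2]
        calc (N.choose k : ℝ) * fAb x k * ((((n - k : ℕ):ℝ) + 1) *
              (z + (((n - k : ℕ):ℝ) + 1)) ^ (n - k))
            = ((N.choose k : ℝ) * (((n - k : ℕ):ℝ) + 1)) * (fAb x k *
              ((z + 1) + ((n - k : ℕ):ℝ)) ^ (n - k)) := by ring_nf
          _ = ((N:ℝ) * (n.choose k : ℝ)) * (fAb x k *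
              ((z + 1) + ((n - k : ℕ):ℝ)) ^ (n - k)) := by rw [← h2, h1]
          _ = (N:ℝ) * ((n.choose k : ℝ) * fAb x k * ((z+1) + ((n - k : ℕ):ℝ)) ^ (n - k)) := by
              ring
      rw [Finset.sum_congr rfl hterm, ← Finset.mul_sum, IH x (z+1)]
      simp only [Polynomial.eval_mul, Polynomial.eval_pow, Polynomial.eval_add,
        Polynomial.eval_X, Polynomial.eval_C, Polynomial.eval_natCast]
      rw [hN]; push_cast; ring
    -- p - q is constant
    have hconst := Polynomial.eq_C_of_derivative_eq_zero
      (show Polynomial.derivative (p - q) = 0 by rw [map_sub, hder, sub_self])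
    have heq : ∀ z : ℝ, p.eval z - q.eval z = (p - q).coeff 0 := by
      intro z
      have : (p - q).eval z = (Polynomial.C ((p - q).coeff 0)).eval z := by rw [← hconst]
      simpa using this
    -- evaluate at y₀ = -x - N
    set y₀ : ℝ := -x - N with hy₀
    have hq0 : q.eval y₀ = 0 := by
      rw [hevalq]
      have : y₀ + (x + N) = 0 := by rw [hy₀]; ring
      rw [this, zero_pow (by omega : N ≠ 0)]
    have hp0 : p.eval y₀ = 0 := by
      rw [hevalp]
      have hterm : ∀ k ∈ Finset.range (N+1), (N.choose k : ℝ) * fAb x k *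
            (y₀ + ((N - k : ℕ):ℝ)) ^ (N - k)
          = ((-1:ℝ)^N * x) * ((-1:ℝ)^k * (N.choose k : ℝ) * (x + k)^n) := by
        intro k hk
        have hkN : k ≤ N := by have := Finset.mem_range.mp hk; omega
        have hbase : y₀ + ((N - k : ℕ):ℝ) = -(x + k) := by
          rw [hy₀, Nat.cast_sub hkN]; push_cast; ring
        rw [hbase, neg_pow]
        have hsign : (-1:ℝ)^(N - k) = (-1:ℝ)^N * (-1:ℝ)^k := by
          have h1 : (-1:ℝ)^(N + k) = (-1:ℝ)^(N - k) := by
            rw [show N + k = (N - k) + 2 * k by omega, pow_add, pow_mul]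
            norm_num
          rw [← h1, pow_add]
        have hfab : fAb x k * (x + k)^(N - k) = x * (x + k)^n := by
          rcases Nat.eq_zero_or_pos k with rfl | hk0
          · have h0 : fAb x 0 = 1 := by simp [fAb]
            rw [h0, one_mul, Nat.sub_zero, Nat.cast_zero, add_zero, hN, pow_succ]
            ring
          · rw [fAb, if_neg hk0.ne']
            rw [mul_assoc, ← pow_add]
            congr 2
            omega
        calc (N.choose k : ℝ) * fAb x k * ((-1:ℝ)^(N-k) * (x + k)^(N - k))
            = (-1:ℝ)^(N-k) * (N.choose k : ℝ) * (fAb x k * (x + k)^(N - k)) := by ring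
          _ = ((-1:ℝ)^N * (-1:ℝ)^k) * (N.choose k : ℝ) * (x * (x + k)^n) := by
              rw [hsign, hfab]
          _ = ((-1:ℝ)^N * x) * ((-1:ℝ)^k * (N.choose k : ℝ) * (x + k)^n) := by ring
      rw [Finset.sum_congr rfl hterm, ← Finset.mul_sum,
        alt_sum_shift N n (by omega) x, mul_zero]
    have hthis := heq y
    rw [← heq y₀, hp0, hq0, sub_zero] at hthis
    have hfin : p.eval y = q.eval y := by linarith [hthis]
    rw [hevalp, hevalq] at hfin
    rw [hfin]
    ring

lemma keyId (m : ℕ) :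
    ∑ k ∈ Finset.range (m+1+1), ((m+1).choose k : ℝ) * fAb (-1) k *
      (((m+1-k:ℕ):ℝ)+1)^((m+1-k) - 1) = 0 := by
  have gdecomp : ∀ j : ℕ, ((j:ℝ)+1)^(j-1) = (1 + (j:ℝ))^j - (j:ℝ) * (1 + (j:ℝ))^(j-1) := by
    intro j
    rcases Nat.eq_zero_or_pos j with rfl | hj
    · norm_num
    · have hp : (1+(j:ℝ))^j = (1+(j:ℝ))^(j-1) * (1+(j:ℝ)) := by
        rw [← pow_succ]
        congr 1
        omega
      rw [hp]
      ring
  simp only [gdecomp, mul_sub]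
  rw [Finset.sum_sub_distrib]
  have h1 : ∑ k ∈ Finset.range (m+1+1), ((m+1).choose k : ℝ) * fAb (-1) k *
      ((1:ℝ) + ((m+1-k:ℕ):ℝ))^(m+1-k) = ((m:ℝ)+1)^(m+1) := by
    have h := abelI (m+1) (-1) 1
    push_cast at h
    rw [h]
    norm_num
  have h2 : ∑ k ∈ Finset.range (m+1+1), ((m+1).choose k : ℝ) * fAb (-1) k *
      (((m+1-k:ℕ):ℝ) * ((1:ℝ) + ((m+1-k:ℕ):ℝ))^((m+1-k)-1)) = ((m:ℝ)+1)^(m+1) := by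
    rw [Finset.sum_range_succ]
    have hlast : ((m+1).choose (m+1) : ℝ) * fAb (-1) (m+1) *
        (((m+1-(m+1):ℕ):ℝ) * ((1:ℝ) + ((m+1-(m+1):ℕ):ℝ))^((m+1-(m+1))-1)) = 0 := by
      simp
    rw [hlast, add_zero]
    have hterm : ∀ k ∈ Finset.range (m+1), ((m+1).choose k : ℝ) * fAb (-1) k *
          (((m+1-k:ℕ):ℝ) * ((1:ℝ) + ((m+1-k:ℕ):ℝ))^((m+1-k)-1))
        = ((m:ℝ)+1) * ((m.choose k : ℝ) * fAb (-1) k * ((2:ℝ) + ((m-k:ℕ):ℝ))^(m-k)) := by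
      intro k hk
      have hkm : k ≤ m := by have := Finset.mem_range.mp hk; omega
      have hc : (((m+1).choose k : ℕ):ℝ) * ((m+1-k:ℕ):ℝ) = ((m:ℝ)+1) * ((m.choose k : ℕ):ℝ) := by
        have := congrArg (Nat.cast : ℕ → ℝ) (choose_mul_sub m k hkm)
        push_cast at this
        convert this using 2 <;> push_cast <;> ring
      have hb : ((m+1-k:ℕ):ℝ) = ((m-k:ℕ):ℝ) + 1 := by
        rw [show m+1-k = (m-k)+1 by omega]
        push_cast
        ring
      have he : (m+1-k)-1 = m-k := by omega
      rw [he, hb]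
      calc ((m+1).choose k : ℝ) * fAb (-1) k * ((((m-k:ℕ):ℝ)+1) * ((1:ℝ) + (((m-k:ℕ):ℝ)+1))^(m-k))
          = (((m+1).choose k : ℝ) * (((m-k:ℕ):ℝ)+1)) * (fAb (-1) k * ((2:ℝ) + ((m-k:ℕ):ℝ))^(m-k)) := by
            ring_nf
        _ = (((m:ℝ)+1) * (m.choose k : ℝ)) * (fAb (-1) k * ((2:ℝ) + ((m-k:ℕ):ℝ))^(m-k)) := by
            rw [← hb, hc]
        _ = ((m:ℝ)+1) * ((m.choose k : ℝ) * fAb (-1) k * ((2:ℝ) + ((m-k:ℕ):ℝ))^(m-k)) := by ring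
    rw [Finset.sum_congr rfl hterm, ← Finset.mul_sum]
    have h := abelI m (-1) 2
    push_cast at h
    rw [h]
    rw [show (-1:ℝ) + 2 + (m:ℝ) = (m:ℝ)+1 by ring]
    rw [pow_succ]
    ring
  rw [h1, h2, sub_self]

lemma coeff_one_sub_Tone (k : ℕ) :
    PowerSeries.coeff k (1 - Tone) = fAb (-1) k / (k.factorial : ℝ) := by
  rw [map_sub]
  rcases Nat.eq_zero_or_pos k with rfl | hk
  · simp [Tone, fAb]
  · rw [PowerSeries.coeff_one, if_neg hk.ne', Tone, PowerSeries.coeff_mk, if_neg hk.ne',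
      fAb, if_neg hk.ne']
    push_cast
    ring

lemma coeff_D (j : ℕ) :
    PowerSeries.coeff j (PowerSeries.derivativeFun Ttree)
      = ((j:ℝ)+1)^(j - 1) / (j.factorial : ℝ) := by
  show PowerSeries.coeff j (PowerSeries.derivative ℝ Ttree) = _
  rw [PowerSeries.coeff_derivative, Ttree, PowerSeries.coeff_mk,
    if_neg (Nat.succ_ne_zero j)]
  have he : j + 1 - 2 = j - 1 := by omega
  rw [he]
  have hf : ((j+1).factorial : ℝ) = ((j:ℝ)+1) * (j.factorial : ℝ) := by
    rw [Nat.factorial_succ]; push_cast; ring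
  rw [hf]
  have h1 : ((j:ℝ)+1) ≠ 0 := by positivity
  have h2 : (j.factorial : ℝ) ≠ 0 := Nat.cast_ne_zero.mpr j.factorial_ne_zero
  push_cast
  field_simp

lemma key_mul : (1 - Tone) * PowerSeries.derivativeFun Ttree = 1 := by
  ext n
  rw [PowerSeries.coeff_mul, Finset.Nat.sum_antidiagonal_eq_sum_range_succ_mk]
  rcases Nat.eq_zero_or_pos n with rfl | hn
  · simp [coeff_one_sub_Tone, coeff_D, fAb]
  · obtain ⟨m, rfl⟩ : ∃ m, n = m + 1 := ⟨n - 1, by omega⟩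
    rw [PowerSeries.coeff_one, if_neg (Nat.succ_ne_zero m)]
    have hterm : ∀ k ∈ Finset.range (m+1+1),
        PowerSeries.coeff k (1 - Tone) *
          PowerSeries.coeff (m+1-k) (PowerSeries.derivativeFun Ttree)
        = (((m+1).factorial : ℝ))⁻¹ * (((m+1).choose k : ℝ) * fAb (-1) k *
            (((m+1-k:ℕ):ℝ)+1)^((m+1-k) - 1)) := by
      intro k hk
      have hkn : k ≤ m+1 := by have := Finset.mem_range.mp hk; omega
      rw [coeff_one_sub_Tone, coeff_D]
      rw [Nat.cast_choose ℝ hkn]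
      have h1 : (k.factorial : ℝ) ≠ 0 := Nat.cast_ne_zero.mpr k.factorial_ne_zero
      have h2 : (((m+1-k).factorial : ℝ)) ≠ 0 := Nat.cast_ne_zero.mpr (m+1-k).factorial_ne_zero
      have h3 : (((m+1).factorial : ℝ)) ≠ 0 := Nat.cast_ne_zero.mpr (m+1).factorial_ne_zero
      field_simp
    rw [Finset.sum_congr rfl hterm, ← Finset.mul_sum, keyId, mul_zero]

/-- `T_1(z)/(1 − T_1(z)) = T'(z) − 1` as formal power series. -/
theorem stmt_8 : Tone * (1 - Tone)⁻¹ = PowerSeries.derivativeFun Ttree - 1 := by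
  have hc : PowerSeries.constantCoeff (1 - Tone) ≠ 0 := by
    rw [map_sub]
    simp [Tone]
  have hinv : (1 - Tone)⁻¹ = PowerSeries.derivativeFun Ttree :=
    (PowerSeries.inv_eq_iff_mul_eq_one hc).mpr (by rw [mul_comm]; exact key_mul)
  rw [hinv]
  have h : Tone = 1 - (1 - Tone) := by ring
  rw [h, sub_mul, one_mul, key_mul]
end

section
/- Define T_1(z) = z + Σ_{n≥1} n^n z^{n+1}/(n+1)! and let T^•(z) = Σ_{n≥1} n^{n-1} z^n/n! be the rooted labelled tree generating function. Then T_1'(z)·(1 − T^•(z)) = 1 as formal power series. -/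
open PowerSeries

section Aux

open Finset fwdDiff

noncomputable def Afun (n : ℕ) (y : ℝ) : ℝ :=
  ∑ k ∈ Finset.range (n + 1), (n.choose k : ℝ) * (k : ℝ) ^ k * (y + ((n - k : ℕ) : ℝ)) ^ (n - k)

noncomputable def Acl (n : ℕ) (y : ℝ) : ℝ :=
  ∑ j ∈ Finset.range (n + 1), (n.descFactorial j : ℝ) * (y + (n : ℝ)) ^ (n - j)

noncomputable def Bfun (n : ℕ) (y : ℝ) : ℝ :=
  ∑ k ∈ Finset.range n, (n.choose k : ℝ) * (k : ℝ) ^ k * (y + ((n - k : ℕ) : ℝ)) ^ (n - k - 1)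

-- choose identity over ℝ
lemma choose_fact (m k : ℕ) (hk : k ≤ m) :
    ((m + 1).choose k : ℝ) * ((m + 1 - k : ℕ) : ℝ) = (m + 1 : ℝ) * (m.choose k : ℝ) := by
  have h1 : (m + 1).choose (k+1) * (k+1) = (m+1).choose k * (m + 1 - k) := Nat.choose_succ_right_eq (m+1) k
  have h2 : (m + 1) * m.choose k = (m + 1).choose (k + 1) * (k + 1) := Nat.add_one_mul_choose_eq m k
  have : (m + 1).choose k * (m + 1 - k) = (m + 1) * m.choose k := by omega
  exact_mod_cast congrArg (fun z : ℕ => (z : ℝ)) this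

lemma reindex (m : ℕ) (y : ℝ) :
    ∑ k ∈ Finset.range (m + 1),
      ((m + 1).choose k : ℝ) * (k : ℝ) ^ k * (((m + 1 - k : ℕ)) : ℝ) * (y + ((m + 1 - k : ℕ) : ℝ)) ^ (m - k)
      = (m + 1 : ℝ) * Afun m (y + 1) := by
  rw [Afun, Finset.mul_sum]
  refine Finset.sum_congr rfl fun k hk => ?_
  have hk' : k ≤ m := by have := Finset.mem_range.mp hk; omega
  have h1 : (m + 1 - k : ℕ) = (m - k) + 1 := by omega
  have h2 : ((m + 1 - k : ℕ) : ℝ) = ((m - k : ℕ) : ℝ) + 1 := by rw [h1]; push_cast; ring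
  rw [h2]
  have h3 := choose_fact m k hk'
  rw [h2] at h3
  calc ((m + 1).choose k : ℝ) * (k:ℝ) ^ k * (((m - k : ℕ):ℝ) + 1) * (y + (((m - k : ℕ):ℝ) + 1)) ^ (m - k)
      = (((m + 1).choose k : ℝ) * (((m - k : ℕ):ℝ) + 1)) * ((k:ℝ) ^ k * (y + (((m - k : ℕ):ℝ) + 1)) ^ (m - k)) := by ring
    _ = ((m + 1 : ℝ) * (m.choose k : ℝ)) * ((k:ℝ) ^ k * (y + (((m - k : ℕ):ℝ) + 1)) ^ (m - k)) := by rw [h3]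
    _ = (m + 1 : ℝ) * ((m.choose k : ℝ) * (k:ℝ) ^ k * (y + 1 + ((m - k : ℕ):ℝ)) ^ (m - k)) := by ring

lemma hAderiv (m : ℕ) (y : ℝ) :
    HasDerivAt (Afun (m + 1)) ((m + 1 : ℝ) * Afun m (y + 1)) y := by
  have h : HasDerivAt (Afun (m + 1))
      (∑ k ∈ Finset.range (m + 2),
        ((m + 1).choose k : ℝ) * (k : ℝ) ^ k *
          ((((m + 1 - k : ℕ)) : ℝ) * (y + ((m + 1 - k : ℕ) : ℝ)) ^ (m + 1 - k - 1) * 1)) y := by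
    unfold Afun
    exact HasDerivAt.fun_sum fun k _ => (((hasDerivAt_id y).add_const _).pow _).const_mul _
  convert h using 1
  rw [Finset.sum_range_succ]
  have hz : m + 1 - (m + 1) = 0 := by omega
  rw [hz]
  simp only [Nat.cast_zero, zero_mul, mul_zero, add_zero]
  rw [← reindex m y]
  refine Finset.sum_congr rfl fun k hk => ?_
  have he : m + 1 - k - 1 = m - k := by omega
  rw [he]; ring

lemma hAclderiv (m : ℕ) (y : ℝ) :
    HasDerivAt (Acl (m + 1)) ((m + 1 : ℝ) * Acl m (y + 1)) y := by
  have h : HasDerivAt (Acl (m + 1))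
      (∑ j ∈ Finset.range (m + 2),
        ((m + 1).descFactorial j : ℝ) *
          ((((m + 1 - j : ℕ)) : ℝ) * (y + (((m+1) : ℕ) : ℝ)) ^ (m + 1 - j - 1) * 1)) y := by
    unfold Acl
    exact HasDerivAt.fun_sum fun j _ => (((hasDerivAt_id y).add_const _).pow _).const_mul _
  convert h using 1
  rw [Finset.sum_range_succ]
  have hz : m + 1 - (m + 1) = 0 := by omega
  rw [hz]
  simp only [Nat.cast_zero, zero_mul, mul_zero, add_zero]
  rw [Acl, Finset.mul_sum]
  refine Finset.sum_congr rfl fun j hj => ?_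
  have hj' : j ≤ m := by have := Finset.mem_range.mp hj; omega
  have he : m + 1 - j - 1 = m - j := by omega
  rw [he]
  have key : ((m+1).descFactorial j) * (m + 1 - j) = (m + 1) * m.descFactorial j := by
    have h1 : (m+1).descFactorial (j+1) = (m + 1 - j) * (m+1).descFactorial j :=
      Nat.descFactorial_succ (m+1) j
    have h2 : (m + 1).descFactorial (j + 1) = (m + 1) * m.descFactorial j :=
      Nat.succ_descFactorial_succ m j
    rw [mul_comm, ← h1]; exact h2
  have key2 : ((m+1).descFactorial j : ℝ) * ((m + 1 - j : ℕ) : ℝ)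
      = ((m:ℝ)+1) * (m.descFactorial j : ℝ) := by
    exact_mod_cast congrArg (fun z : ℕ => (z : ℝ)) key
  have hB : (y + (((m+1) : ℕ) : ℝ)) = (y + 1) + (m : ℝ) := by push_cast; ring
  calc ((m:ℝ) + 1) * ((m.descFactorial j : ℝ) * ((y + 1) + (m:ℝ)) ^ (m - j))
      = (((m:ℝ)+1) * (m.descFactorial j : ℝ)) * ((y + 1) + (m:ℝ)) ^ (m - j) := by ring
    _ = (((m+1).descFactorial j : ℝ) * ((m + 1 - j : ℕ) : ℝ)) * ((y + 1) + (m:ℝ)) ^ (m - j) := by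
        rw [key2]
    _ = ((m+1).descFactorial j : ℝ) * (((m + 1 - j : ℕ) : ℝ) * (y + (((m+1) : ℕ) : ℝ)) ^ (m - j) * 1) := by
        rw [hB]; ring

lemma fd_pow : ∀ n : ℕ, ∀ i ≤ n, ∀ y : ℝ,
    (Δ_[1])^[n] (fun t : ℝ => t ^ i) y = if i = n then (n.factorial : ℝ) else 0 := by
  intro n
  induction n with
  | zero => intro i hi y; interval_cases i; simp
  | succ n IH =>
    intro i hi y
    rw [Function.iterate_succ_apply]
    have hΔ : Δ_[1] (fun t : ℝ => t ^ i)
        = ∑ m ∈ Finset.range i, (i.choose m : ℝ) • (fun t : ℝ => t ^ m) := by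
      funext t
      simp only [fwdDiff, Finset.sum_apply, Pi.smul_apply, smul_eq_mul]
      rw [add_pow, Finset.sum_range_succ]
      simp [mul_comm]
    rw [hΔ, fwdDiff_iter_finset_sum, Finset.sum_apply]
    have hcong : ∀ m ∈ Finset.range i,
        ((Δ_[1])^[n] ((i.choose m : ℝ) • (fun t : ℝ => t ^ m))) y
        = if m = n then (i.choose m : ℝ) * n.factorial else 0 := by
      intro m hm
      rw [fwdDiff_iter_const_smul]
      have hmn : m ≤ n := by
        have := Finset.mem_range.mp hm; omega
      simp only [Pi.smul_apply, smul_eq_mul, IH m hmn y]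
      split <;> simp
    rw [Finset.sum_congr rfl hcong, Finset.sum_ite_eq' (Finset.range i) n]
    by_cases h : i = n + 1
    · subst h
      simp [Nat.factorial_succ, Nat.choose_succ_self_right]
    · have : i ≤ n := by omega
      simp [Finset.mem_range, Nat.lt_irrefl, h, Nat.not_lt.mpr this]

lemma AevalA (n : ℕ) : Afun n (-(n : ℝ)) = n.factorial := by
  have h := fwdDiff_iter_eq_sum_shift (1 : ℝ) (fun t : ℝ => t ^ n) n (0 : ℝ)
  rw [fd_pow n n le_rfl 0, if_pos rfl] at h
  rw [Afun, h]
  refine Finset.sum_congr rfl fun k hk => ?_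
  have hk' : k ≤ n := by have := Finset.mem_range.mp hk; omega
  have hc : ((n - k : ℕ) : ℝ) = (n : ℝ) - (k : ℝ) := by
    exact Nat.cast_sub hk'
  rw [hc]
  have hb : (-(n:ℝ) + ((n:ℝ) - (k:ℝ))) = -(k:ℝ) := by ring
  rw [hb, neg_pow]
  have hkk : (k:ℝ) ^ k * (k:ℝ) ^ (n - k) = (k:ℝ) ^ n := by
    rw [← pow_add]; congr 1; omega
  have : ((-1 : ℤ) ^ (n - k) * (n.choose k) : ℤ) • ((0 : ℝ) + k • (1:ℝ)) ^ n
      = ((-1:ℝ)) ^ (n - k) * (n.choose k : ℝ) * (k : ℝ) ^ n := by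
    push_cast
    simp [zsmul_eq_mul]
  rw [this]
  calc (n.choose k : ℝ) * (k:ℝ) ^ k * ((-1:ℝ) ^ (n-k) * (k:ℝ) ^ (n-k))
      = (-1:ℝ) ^ (n-k) * (n.choose k : ℝ) * ((k:ℝ) ^ k * (k:ℝ) ^ (n - k)) := by ring
    _ = (-1:ℝ) ^ (n-k) * (n.choose k : ℝ) * (k:ℝ) ^ n := by rw [hkk]

lemma AevalC (n : ℕ) : Acl n (-(n : ℝ)) = n.factorial := by
  rw [Acl]
  have hb : (-(n:ℝ) + (n:ℝ)) = 0 := by ring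
  rw [Finset.sum_eq_single n]
  · rw [hb, Nat.sub_self, pow_zero, mul_one, Nat.descFactorial_self]
  · intro j hj hne
    have hj' := Finset.mem_range.mp hj
    rw [hb, zero_pow (by omega : n - j ≠ 0), mul_zero]
  · intro h; exact absurd (Finset.self_mem_range_succ n) h

lemma cauchy : ∀ n : ℕ, ∀ y : ℝ, Afun n y = Acl n y := by
  intro n
  induction n with
  | zero => intro y; simp [Afun, Acl]
  | succ m IH =>
    intro y
    have hd : ∀ z : ℝ, HasDerivAt (fun w => Afun (m+1) w - Acl (m+1) w) 0 z := by
      intro z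
      have := (hAderiv m z).sub (hAclderiv m z)
      rwa [IH (z+1), sub_self] at this
    have hdiff : Differentiable ℝ (fun w => Afun (m+1) w - Acl (m+1) w) :=
      fun z => (hd z).differentiableAt
    have hconst := is_const_of_deriv_eq_zero hdiff (fun z => (hd z).deriv) y (-( (m+1 : ℕ) : ℝ))
    have : Afun (m+1) (-( (m+1 : ℕ) : ℝ)) - Acl (m+1) (-( (m+1 : ℕ) : ℝ)) = 0 := by
      rw [AevalA (m+1), AevalC (m+1), sub_self]
    have h2 : Afun (m+1) y - Acl (m+1) y = 0 := by rw [hconst, this]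
    linarith [h2]

lemma split (m : ℕ) (y : ℝ) :
    Afun (m+1) y = y * Bfun (m+1) y + ((m:ℝ)+1) * Afun m (y+1) + (((m+1) : ℕ) : ℝ) ^ (m+1) := by
  rw [Afun, Finset.sum_range_succ]
  have hlast : (((m+1).choose (m+1) : ℕ) : ℝ) * (((m+1):ℕ):ℝ) ^ (m+1) *
      (y + (((m+1) - (m+1) : ℕ) : ℝ)) ^ ((m+1) - (m+1)) = (((m+1):ℕ):ℝ) ^ (m+1) := by
    simp
  rw [hlast, add_left_inj]
  have hre := reindex m y
  rw [Bfun, Finset.mul_sum, ← hre, ← Finset.sum_add_distrib]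
  refine Finset.sum_congr rfl fun k hk => ?_
  have hk' := Finset.mem_range.mp hk
  have he2 : m + 1 - k - 1 = m - k := by omega
  have he1 : m + 1 - k = (m - k) + 1 := by omega
  rw [he2, he1, pow_succ]
  ring

lemma hA1 (m : ℕ) : Acl (m+1) 1 = (((m+2) : ℕ) : ℝ) ^ (m+1) + ((m:ℝ)+1) * Acl m 2 := by
  rw [Acl, Finset.sum_range_succ']
  have h0 : ((m+1).descFactorial 0 : ℝ) * ((1:ℝ) + (((m+1):ℕ):ℝ)) ^ (m+1-0) = (((m+2):ℕ):ℝ)^(m+1) := by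
    rw [Nat.descFactorial_zero]
    push_cast
    ring_nf
  rw [h0, Acl, Finset.mul_sum, add_comm]
  congr 1
  refine Finset.sum_congr rfl fun i hi => ?_
  rw [Nat.succ_descFactorial_succ]
  have he : m + 1 - (i+1) = m - i := by omega
  rw [he]
  have hb : (1:ℝ) + (((m+1):ℕ):ℝ) = 2 + (m:ℝ) := by push_cast; ring
  rw [hb]
  push_cast
  ring

lemma keyB : ∀ n : ℕ, 1 ≤ n → Bfun n 0 = ((n : ℕ) : ℝ) ^ n := by
  intro n hn
  match n, hn with
  | 1, _ => simp [Bfun]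
  | (m+2), _ =>
    have hc : ((m+1 : ℕ) : ℝ) + 1 = (((m+2):ℕ):ℝ) := by push_cast; ring
    set G : ℝ → ℝ := fun y =>
      Acl (m+2) y - (((m+2):ℕ):ℝ) * Acl (m+1) (y+1) - (((m+2):ℕ):ℝ) ^ (m+2) with hG
    have hrel : ∀ y : ℝ, y * Bfun (m+2) y = G y := by
      intro y
      have hs := split (m+1) y
      rw [cauchy (m+2) y, cauchy (m+1) (y+1)] at hs
      simp only [hG]
      simp only [show m+1+1 = m+2 from rfl] at hs
      rw [hc] at hs
      linarith [hs]
    have hG0 : G 0 = 0 := by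
      have := hrel 0
      simpa using this.symm
    have hGd : HasDerivAt G ((((m+2):ℕ):ℝ) ^ (m+2)) 0 := by
      have h1 : HasDerivAt (Acl (m+2)) ((((m+2):ℕ):ℝ) * Acl (m+1) (0+1)) 0 := by
        rw [← hc]; exact hAclderiv (m+1) 0
      have h2 : HasDerivAt (fun y => Acl (m+1) (y+1)) (((m:ℝ)+1) * Acl m ((0+1)+1)) 0 :=
        HasDerivAt.comp_add_const 0 1 (hAclderiv m (0+1))
      have h3 := (h1.sub (h2.const_mul (((m+2):ℕ):ℝ))).sub_const ((((m+2):ℕ):ℝ) ^ (m+2))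
      have hD : (((m+2):ℕ):ℝ) * Acl (m+1) (0+1) - (((m+2):ℕ):ℝ) * (((m:ℝ)+1) * Acl m ((0+1)+1))
          = (((m+2):ℕ):ℝ) ^ (m+2) := by
        rw [show (0:ℝ)+1 = 1 by norm_num, show (1:ℝ)+1 = 2 by norm_num, hA1 m]
        push_cast
        ring
      rw [show ((0:ℝ)+1)+1 = (0+1)+1 from rfl] at hD
      rw [hD] at h3
      exact h3
    have hBc : Continuous (Bfun (m+2)) := by
      unfold Bfun
      fun_prop
    have h1 : Filter.Tendsto (Bfun (m+2)) (nhdsWithin 0 {(0:ℝ)}ᶜ) (nhds (Bfun (m+2) 0)) :=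
      (hBc.tendsto 0).mono_left nhdsWithin_le_nhds
    have h2 : Filter.Tendsto (slope G 0) (nhdsWithin 0 {(0:ℝ)}ᶜ) (nhds ((((m+2):ℕ):ℝ) ^ (m+2))) :=
      hasDerivAt_iff_tendsto_slope.mp hGd
    have heq : ∀ᶠ y in nhdsWithin 0 {(0:ℝ)}ᶜ, Bfun (m+2) y = slope G 0 y := by
      filter_upwards [self_mem_nhdsWithin] with y hy
      have hy0 : y ≠ 0 := hy
      rw [slope_def_field, ← hrel y, hG0, sub_zero, sub_zero]
      field_simp
    have h1' : Filter.Tendsto (slope G 0) (nhdsWithin 0 {(0:ℝ)}ᶜ) (nhds (Bfun (m+2) 0)) :=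
      Filter.Tendsto.congr' heq h1
    exact tendsto_nhds_unique h1' h2

lemma keysum (n : ℕ) (hn : 1 ≤ n) :
    ∑ k ∈ Finset.range n, (n.choose k : ℝ) * (k:ℝ) ^ k * ((n - k : ℕ) : ℝ) ^ (n - k - 1)
      = ((n:ℕ) : ℝ) ^ n := by
  have h := keyB n hn
  rw [Bfun] at h
  simpa using h


lemma c1 (k : ℕ) : (PowerSeries.coeff k) (PowerSeries.derivativeFun Tone)
    = (k : ℝ) ^ k / (k.factorial : ℝ) := by
  rw [show PowerSeries.derivativeFun Tone = PowerSeries.derivative ℝ Tone from rfl,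
    PowerSeries.coeff_derivative, Tone, PowerSeries.coeff_mk]
  rw [if_neg (Nat.succ_ne_zero k)]
  have h1 : ((k + 1 : ℕ) : ℝ) - 1 = (k : ℝ) := by push_cast; ring
  have h2 : k + 1 - 1 = k := rfl
  rw [h1, h2, Nat.factorial_succ]
  have hk : (k.factorial : ℝ) ≠ 0 := by exact_mod_cast k.factorial_ne_zero
  have hk1 : ((k:ℝ) + 1) ≠ 0 := by positivity
  field_simp
  push_cast
  ring

lemma c2zero : (PowerSeries.coeff 0) (1 - Tdot) = 1 := by
  rw [map_sub, PowerSeries.coeff_zero_eq_constantCoeff, map_one]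
  simp [Tdot]

lemma c2 (m : ℕ) (hm : m ≠ 0) : (PowerSeries.coeff m) (1 - Tdot)
    = -((m : ℝ) ^ (m - 1) / (m.factorial : ℝ)) := by
  rw [map_sub, PowerSeries.coeff_one, if_neg hm, Tdot, PowerSeries.coeff_mk, if_neg hm]
  ring

/-- `T_1'(z)·(1 − T^•(z)) = 1` as formal power series. -/
theorem stmt_9 : PowerSeries.derivativeFun Tone * (1 - Tdot) = 1 := by
  ext n
  rw [PowerSeries.coeff_mul, Finset.Nat.sum_antidiagonal_eq_sum_range_succ_mk]
  rcases Nat.eq_zero_or_pos n with hn | hn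
  · subst hn
    simp [c1, c2zero]
  · rw [PowerSeries.coeff_one, if_neg (by omega : n ≠ 0)]
    rw [Finset.sum_range_succ]
    have hlast : (PowerSeries.coeff n) (PowerSeries.derivativeFun Tone) *
        (PowerSeries.coeff (n - n)) (1 - Tdot) = (n:ℝ)^n / n.factorial := by
      rw [Nat.sub_self, c1, c2zero, mul_one]
    rw [hlast]
    have hterm : ∀ k ∈ Finset.range n,
        (PowerSeries.coeff k) (PowerSeries.derivativeFun Tone) *
          (PowerSeries.coeff (n - k)) (1 - Tdot)
        = -((n.choose k : ℝ) * (k:ℝ) ^ k * ((n - k : ℕ) : ℝ) ^ (n - k - 1) / (n.factorial : ℝ)) := by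
      intro k hk
      have hk' : k < n := Finset.mem_range.mp hk
      rw [c1, c2 (n - k) (by omega)]
      have hfac : ((n.choose k : ℕ) : ℝ) * (k.factorial : ℝ) * (((n - k).factorial : ℕ) : ℝ)
          = (n.factorial : ℝ) := by
        exact_mod_cast congrArg (fun z : ℕ => (z : ℝ))
          (Nat.choose_mul_factorial_mul_factorial (le_of_lt hk'))
      have h1 : (k.factorial : ℝ) ≠ 0 := by exact_mod_cast k.factorial_ne_zero
      have h2 : ((n-k).factorial : ℝ) ≠ 0 := by exact_mod_cast (n-k).factorial_ne_zero
      have h3 : (n.factorial : ℝ) ≠ 0 := by exact_mod_cast n.factorial_ne_zero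
      have hC : ((n.choose k : ℕ) : ℝ) ≠ 0 := by
        have := Nat.choose_pos (le_of_lt hk')
        positivity
      rw [← hfac]
      field_simp
    rw [Finset.sum_congr rfl hterm, Finset.sum_neg_distrib, ← Finset.sum_div, keysum n hn]
    have h3 : (n.factorial : ℝ) ≠ 0 := by exact_mod_cast n.factorial_ne_zero
    field_simp
    ring

end Aux
end

section
/- The rooted labelled tree generating function T^•(z) = Σ_{n≥1} n^{n-1} z^n/n! satisfies T^•(s·e^{−s}) = s for all 0 ≤ s < 1; that is, T^• is the functional inverse of s ↦ s·e^{−s} on [0,1). -/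
open Finset Real
open scoped fwdDiff Nat ENNReal NNReal Topology


lemma fwdDiff_cast_pow_eq_zero : ∀ (k M : ℕ), k < M →
    (fwdDiff 1)^[M] (fun x : ℕ ↦ (x : ℝ) ^ k) = fun _ ↦ 0 := by
  intro k
  induction k using Nat.strong_induction_on with
  | _ k IH =>
    intro M hkM
    obtain ⟨M', rfl⟩ : ∃ M', M = M' + 1 :=
      ⟨M - 1, by omega⟩
    have hstep : (fwdDiff 1) (fun x : ℕ ↦ (x : ℝ) ^ k)
        = ∑ j ∈ range k, ((k.choose j : ℝ)) • (fun x : ℕ ↦ (x : ℝ) ^ j) := by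
      funext x
      simp only [fwdDiff, Finset.sum_apply, Pi.smul_apply, smul_eq_mul]
      push_cast
      rw [add_pow, Finset.sum_range_succ]
      simp [mul_comm]
    rw [Function.iterate_succ_apply, hstep, fwdDiff_iter_finset_sum]
    funext x
    rw [Finset.sum_apply]
    refine Finset.sum_eq_zero fun j hj ↦ ?_
    have hj' := mem_range.mp hj
    rw [fwdDiff_iter_const_smul, IH j hj' M' (by omega)]
    simp

lemma alt_sum_eq_zero (k M : ℕ) (h : k < M) :
    ∑ l ∈ range (M + 1), (-1 : ℝ) ^ (M - l) * (M.choose l) * (l : ℝ) ^ k = 0 := by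
  have h1 := fwdDiff_iter_eq_sum_shift (1 : ℕ) (fun x : ℕ ↦ (x : ℝ) ^ k) M 0
  rw [fwdDiff_cast_pow_eq_zero k M h] at h1
  have h2 : ∑ l ∈ range (M + 1),
      ((-1 : ℤ) ^ (M - l) * M.choose l) • (((0 + l • 1 : ℕ) : ℝ) ^ k) = 0 := h1.symm
  rw [← h2]
  refine Finset.sum_congr rfl fun l _ ↦ ?_
  simp only [zero_add, smul_eq_mul, mul_one, zsmul_eq_mul]
  push_cast
  ring

lemma antidiag_sum_eq_zero (m : ℕ) (hm : 1 ≤ m) :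
    ∑ p ∈ Finset.HasAntidiagonal.antidiagonal m,
      ((p.1 : ℝ) + 1) ^ m * (-1) ^ p.2 / ((p.1 + 1)! * (p.2)!) = 0 := by
  rw [Finset.Nat.sum_antidiagonal_eq_sum_range_succ_mk]
  have key := alt_sum_eq_zero m (m + 1) (by omega)
  rw [Finset.sum_range_succ'] at key
  -- key : ∑ i ∈ range (m+1), (-1)^(m+1-(i+1)) * C(m+1,i+1) * (i+1)^m + (l=0 term) = 0
  have h0 : (-1 : ℝ) ^ (m + 1 - 0) * ((m+1).choose 0) * ((0:ℕ) : ℝ) ^ m = 0 := by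
    simp [zero_pow (by omega : m ≠ 0)]
  rw [h0, add_zero] at key
  simp only [Nat.add_sub_add_right] at key
  have hfac : ∀ i ∈ range (m + 1),
      ((i : ℝ) + 1) ^ m * (-1) ^ (m - i) / ((i + 1)! * (m - i)!)
        = ((-1 : ℝ) ^ (m - i) * ((m+1).choose (i+1)) * ((i+1 : ℕ) : ℝ) ^ m) / (m+1)! := by
    intro i hi
    have him := mem_range.mp hi
    have hi' : i + 1 ≤ m + 1 := by omega
    have hch : ((m+1).choose (i+1)) * ((i+1)! * (m - i)!) = (m+1)! := by
      have := Nat.choose_mul_factorial_mul_factorial hi'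
      simpa [mul_assoc, Nat.succ_sub_succ] using this
    have hch' : (((m+1).choose (i+1) : ℝ)) * ((i+1)! * (m - i)!) = (m+1)! := by
      exact_mod_cast congrArg (Nat.cast : ℕ → ℝ) hch
    have hne : ((i+1)! * (m - i)! : ℝ) ≠ 0 := by positivity
    have hne' : ((m+1)! : ℝ) ≠ 0 := by positivity
    field_simp
    rw [← hch']
    push_cast
    ring
  calc ∑ i ∈ range (m + 1), (((i, m - i).1 : ℝ) + 1) ^ m * (-1) ^ (i, m - i).2 / (((i, m-i).1 + 1)! * ((i, m-i).2)!)
      = ∑ i ∈ range (m + 1),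
        ((-1 : ℝ) ^ (m - i) * ((m+1).choose (i+1)) * ((i+1 : ℕ) : ℝ) ^ m) / (m+1)! := by
        refine Finset.sum_congr rfl fun i hi ↦ ?_
        exact hfac i hi
    _ = (∑ i ∈ range (m + 1),
        (-1 : ℝ) ^ (m - i) * ((m+1).choose (i+1)) * ((i+1 : ℕ) : ℝ) ^ m) / (m+1)! := by
        rw [Finset.sum_div]
    _ = 0 := by rw [key, zero_div]

noncomputable def myc : ℕ → ℝ
  | 0 => 0
  | (n + 1) => ((n : ℝ) + 1) ^ n / (n + 1)!

lemma myc_nonneg (n : ℕ) : 0 ≤ myc n := by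
  cases n with
  | zero => simp [myc]
  | succ n => unfold myc; positivity

lemma exp_tsum (x : ℝ) : Real.exp x = ∑' n : ℕ, x ^ n / n ! := by
  rw [Real.exp_eq_exp_ℝ, NormedSpace.exp_eq_tsum_div]

lemma myc_le (n : ℕ) : myc n ≤ exp 1 ^ n := by
  cases n with
  | zero => simp [myc]
  | succ n =>
    unfold myc
    have h1 : ((n : ℝ) + 1) ^ n / (n + 1)! ≤ ((n : ℝ) + 1) ^ (n + 1) / (n + 1)! := by
      apply div_le_div_of_nonneg_right ?_ (by positivity)
      exact pow_le_pow_right₀ (by linarith [Nat.cast_nonneg (α := ℝ) n]) (Nat.le_succ n)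
    have h2 : ((n : ℝ) + 1) ^ (n + 1) / (n + 1)! ≤ exp ((n : ℝ) + 1) := by
      have := Real.pow_div_factorial_le_exp ((n : ℝ) + 1) (by positivity) (n + 1)
      simpa using this
    have h3 : exp ((n : ℝ) + 1) = exp 1 ^ (n + 1) := by
      rw [← Real.exp_nat_mul]
      norm_num
    calc ((n : ℝ) + 1) ^ n / ↑(n + 1)! ≤ ((n : ℝ) + 1) ^ (n + 1) / (n + 1)! := h1
      _ ≤ exp ((n : ℝ) + 1) := h2
      _ = exp 1 ^ (n + 1) := h3

lemma summable_myc {x : ℝ} (hx : exp 1 * |x| < 1) : Summable fun n ↦ myc n * x ^ n := by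
  refine Summable.of_abs (Summable.of_nonneg_of_le (fun n ↦ abs_nonneg _) (fun n ↦ ?_)
    (summable_geometric_of_lt_one (by positivity) hx))
  calc |myc n * x ^ n| = myc n * |x| ^ n := by
        rw [abs_mul, abs_pow, abs_of_nonneg (myc_nonneg n)]
    _ ≤ exp 1 ^ n * |x| ^ n := mul_le_mul_of_nonneg_right (myc_le n) (by positivity)
    _ = (exp 1 * |x|) ^ n := (mul_pow _ _ _).symm

lemma small_eq (s : ℝ) (hs : |s| < 8⁻¹) :
    ∑' n : ℕ, myc n * (s * exp (-s)) ^ n = s := by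
  set F : ℕ × ℕ → ℝ := fun p ↦
    ((p.1 : ℝ) + 1) ^ (p.1 + p.2) * (-1) ^ p.2 * s ^ (p.1 + 1 + p.2) / ((p.1 + 1)! * (p.2)!)
    with hF_def
  -- closed form for rows
  have hrow : ∀ n k, F (n, k) =
      (((n : ℝ) + 1) ^ n * s ^ (n + 1) / (n + 1)!) * ((-((n : ℝ) + 1) * s) ^ k / k !) := by
    intro n k
    simp only [hF_def]
    have h1 : (-((n : ℝ) + 1) * s) = (-1) * (((n : ℝ) + 1) * s) := by ring
    rw [h1, mul_pow, mul_pow, pow_add, pow_add]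
    push_cast
    ring
  have habs : ∀ n k, |F (n, k)| =
      (((n : ℝ) + 1) ^ n * |s| ^ (n + 1) / (n + 1)!) * ((((n : ℝ) + 1) * |s|) ^ k / k !) := by
    intro n k
    rw [hrow]
    have h1 : |(-((n : ℝ) + 1) * s)| = ((n : ℝ) + 1) * |s| := by
      rw [abs_mul, abs_neg, abs_of_nonneg (by positivity : (0:ℝ) ≤ (n : ℝ) + 1)]
    rw [abs_mul, abs_div, abs_div, abs_mul, abs_pow, abs_pow, abs_pow, h1,
      abs_of_nonneg (by positivity : (0:ℝ) ≤ (n : ℝ) + 1),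
      abs_of_nonneg (by positivity : (0:ℝ) ≤ (((n+1)! : ℕ) : ℝ)),
      abs_of_nonneg (by positivity : (0:ℝ) ≤ ((k ! : ℕ) : ℝ))]
  -- summability of rows
  have hrow_summ : ∀ n : ℕ, Summable fun k ↦ F (n, k) := by
    intro n
    have : (fun k ↦ F (n, k)) = fun k ↦
        (((n : ℝ) + 1) ^ n * s ^ (n + 1) / (n + 1)!) * ((-((n : ℝ) + 1) * s) ^ k / k !) :=
      funext fun k ↦ hrow n k
    rw [this]
    exact (Real.summable_pow_div_factorial _).mul_left _
  have habs_summ : ∀ n : ℕ, Summable fun k ↦ |F (n, k)| := by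
    intro n
    have : (fun k ↦ |F (n, k)|) = fun k ↦
        (((n : ℝ) + 1) ^ n * |s| ^ (n + 1) / (n + 1)!) * ((((n : ℝ) + 1) * |s|) ^ k / k !) :=
      funext fun k ↦ habs n k
    rw [this]
    exact (Real.summable_pow_div_factorial _).mul_left _
  have habs_tsum : ∀ n : ℕ, ∑' k, |F (n, k)| =
      (((n : ℝ) + 1) ^ n * |s| ^ (n + 1) / (n + 1)!) * exp (((n : ℝ) + 1) * |s|) := by
    intro n
    rw [tsum_congr (fun k ↦ habs n k), tsum_mul_left, ← exp_tsum]
  have hrow_tsum : ∀ n : ℕ, ∑' k, F (n, k) =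
      (((n : ℝ) + 1) ^ n * s ^ (n + 1) / (n + 1)!) * exp (-((n : ℝ) + 1) * s) := by
    intro n
    rw [tsum_congr (fun k ↦ hrow n k), tsum_mul_left, ← exp_tsum]
  -- the absolute row sums are dominated by a geometric series
  have hq : exp 1 ^ 2 / 8 < 1 := by
    nlinarith [Real.exp_one_lt_d9, Real.exp_pos 1]
  have hbound : ∀ n : ℕ, ∑' k, |F (n, k)| ≤ (exp 1 ^ 2 / 8) ^ (n + 1) := by
    intro n
    rw [habs_tsum n]
    have h1 : ((n : ℝ) + 1) ^ n / (n + 1)! ≤ exp 1 ^ (n + 1) := myc_le (n + 1)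
    have h2 : exp (((n : ℝ) + 1) * |s|) ≤ exp 1 ^ (n + 1) := by
      rw [← Real.exp_nat_mul]
      apply Real.exp_le_exp.mpr
      push_cast
      nlinarith [abs_nonneg s, Nat.cast_nonneg (α := ℝ) n, hs]
    have h3 : |s| ^ (n + 1) ≤ (8⁻¹ : ℝ) ^ (n + 1) := by
      apply pow_le_pow_left₀ (abs_nonneg s) hs.le
    calc ((n : ℝ) + 1) ^ n * |s| ^ (n + 1) / (n + 1)! * exp (((n : ℝ) + 1) * |s|)
        = (((n : ℝ) + 1) ^ n / (n + 1)!) * |s| ^ (n + 1) * exp (((n : ℝ) + 1) * |s|) := by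
          ring
      _ ≤ exp 1 ^ (n + 1) * (8⁻¹ : ℝ) ^ (n + 1) * exp 1 ^ (n + 1) := by
          apply mul_le_mul ?_ h2 (Real.exp_pos _).le (by positivity)
          apply mul_le_mul h1 h3 (by positivity) (by positivity)
      _ = (exp 1 ^ 2 / 8) ^ (n + 1) := by
          rw [div_pow, ← pow_mul, inv_pow]
          ring
  have habs_total : Summable fun p : ℕ × ℕ ↦ |F p| := by
    apply (summable_prod_of_nonneg (fun p ↦ abs_nonneg (F p))).mpr
    refine ⟨habs_summ, ?_⟩
    apply Summable.of_nonneg_of_le (fun n ↦ tsum_nonneg fun k ↦ abs_nonneg _) hbound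
    have : Summable fun n : ℕ ↦ (exp 1 ^ 2 / 8) ^ n :=
      summable_geometric_of_lt_one (by positivity) hq
    exact (this.mul_left _).congr fun n ↦ (pow_succ' _ _).symm
  have hF_summ : Summable F := habs_total.of_abs
  -- first evaluation: sum by rows
  have way1 : ∑' p : ℕ × ℕ, F p = ∑' n : ℕ, myc (n + 1) * (s * exp (-s)) ^ (n + 1) := by
    rw [hF_summ.tsum_prod' hrow_summ]
    refine tsum_congr fun n ↦ ?_
    rw [hrow_tsum n]
    show _ = myc (n + 1) * _
    unfold myc
    rw [mul_pow, ← Real.exp_nat_mul]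
    have : ((n : ℝ) + 1) * -s = -((n : ℝ) + 1) * s := by push_cast; ring
    rw [show (((n + 1 : ℕ) : ℝ) * -s) = -((n : ℝ) + 1) * s by push_cast; ring]
    ring
  -- second evaluation: sum by antidiagonals
  have way2 : ∑' p : ℕ × ℕ, F p = s := by
    have hsig : Summable fun x : (Σ n : ℕ, (Finset.HasAntidiagonal.antidiagonal n : Finset (ℕ × ℕ))) ↦
        F (Finset.HasAntidiagonal.sigmaAntidiagonalEquivProd x) :=
      Finset.HasAntidiagonal.sigmaAntidiagonalEquivProd.summable_iff.mpr hF_summ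
    rw [← Finset.HasAntidiagonal.sigmaAntidiagonalEquivProd.tsum_eq F,
      hsig.tsum_sigma' (fun m ↦ (hasSum_fintype _).summable)]
    have hinner : ∀ m : ℕ,
        (∑' c : (Finset.HasAntidiagonal.antidiagonal m : Finset (ℕ × ℕ)),
          F (Finset.HasAntidiagonal.sigmaAntidiagonalEquivProd ⟨m, c⟩)) = if m = 0 then s else 0 := by
      intro m
      have : (∑' c : (Finset.HasAntidiagonal.antidiagonal m : Finset (ℕ × ℕ)),
          F (Finset.HasAntidiagonal.sigmaAntidiagonalEquivProd ⟨m, c⟩)) = ∑ p ∈ Finset.HasAntidiagonal.antidiagonal m, F p := by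
        rw [tsum_fintype]
        exact Finset.sum_finset_coe (f := F) (s := Finset.HasAntidiagonal.antidiagonal m)
      rw [this]
      rcases Nat.eq_zero_or_pos m with hm | hm
      · subst hm
        simp only [Finset.Nat.antidiagonal_zero, Finset.sum_singleton, if_true]
        simp [hF_def]
      · rw [if_neg (by omega)]
        have hsplit : ∀ p ∈ Finset.HasAntidiagonal.antidiagonal m,
            F p = s ^ (m + 1) * (((p.1 : ℝ) + 1) ^ m * (-1) ^ p.2 / ((p.1 + 1)! * (p.2)!)) := by
          intro p hp
          have hpm : p.1 + p.2 = m := Finset.HasAntidiagonal.mem_antidiagonal.mp hp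
          simp only [hF_def]
          rw [show p.1 + 1 + p.2 = m + 1 by omega, hpm]
          ring
        rw [Finset.sum_congr rfl hsplit, ← Finset.mul_sum,
          antidiag_sum_eq_zero m hm, mul_zero]
    rw [tsum_congr hinner]
    exact tsum_ite_eq 0 (fun _ ↦ s)
  -- assemble
  have hxsmall : exp 1 * |s * exp (-s)| < 1 := by
    have hns : -s ≤ |s| := by
      have := le_abs_self (-s); rwa [abs_neg] at this
    have h1 : exp (-s) ≤ exp 1 := Real.exp_le_exp.mpr (by nlinarith)
    rw [abs_mul, Real.abs_exp]
    have h2 : |s| * exp (-s) ≤ |s| * exp 1 := mul_le_mul_of_nonneg_left h1 (abs_nonneg s)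
    have h3 : exp 1 * (|s| * exp (-s)) ≤ exp 1 * (|s| * exp 1) :=
      mul_le_mul_of_nonneg_left h2 (Real.exp_pos 1).le
    have h4 : exp 1 * (|s| * exp 1) < exp 1 * (8⁻¹ * exp 1) := by
      apply mul_lt_mul_of_pos_left ?_ (Real.exp_pos 1)
      exact mul_lt_mul_of_pos_right hs (Real.exp_pos 1)
    nlinarith [Real.exp_one_lt_d9, Real.exp_pos 1]
  have hsum := summable_myc hxsmall
  have h0 : myc 0 * (s * exp (-s)) ^ 0 = 0 := by simp [myc]
  rw [hsum.tsum_eq_zero_add, h0, zero_add, ← way1, way2]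

lemma myT_radius :
    ENNReal.ofReal (exp 1)⁻¹ ≤ (FormalMultilinearSeries.ofScalars ℝ myc).radius := by
  apply ENNReal.le_of_forall_nnreal_lt
  intro r hr
  have hr' : (r : ℝ) < (exp 1)⁻¹ := by
    have := (ENNReal.lt_ofReal_iff_toReal_lt (a := (r : ℝ≥0∞)) ENNReal.coe_ne_top).mp hr
    simpa using this
  apply FormalMultilinearSeries.le_radius_of_summable
  have hgeo : Summable fun n : ℕ ↦ (exp 1 * r) ^ n := by
    apply summable_geometric_of_lt_one (by positivity)
    calc exp 1 * (r : ℝ) < exp 1 * (exp 1)⁻¹ := mul_lt_mul_of_pos_left hr' (Real.exp_pos 1)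
      _ = 1 := mul_inv_cancel₀ (Real.exp_pos 1).ne'
  refine Summable.of_nonneg_of_le (fun n ↦ by positivity) (fun n ↦ ?_) hgeo
  rw [FormalMultilinearSeries.ofScalars_norm, mul_pow]
  apply mul_le_mul_of_nonneg_right _ (by positivity)
  rw [Real.norm_eq_abs, abs_of_nonneg (myc_nonneg n)]
  exact myc_le n

lemma analyticAt_T {y : ℝ} (hy : |y| < (exp 1)⁻¹) :
    AnalyticAt ℝ (FormalMultilinearSeries.ofScalars ℝ myc).sum y := by
  have hpos : (0 : ℝ≥0∞) < (FormalMultilinearSeries.ofScalars ℝ myc).radius :=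
    lt_of_lt_of_le (ENNReal.ofReal_pos.mpr (by positivity)) myT_radius
  have hball := (FormalMultilinearSeries.ofScalars ℝ myc).hasFPowerSeriesOnBall hpos
  apply hball.analyticAt_of_mem
  rw [EMetric.mem_ball, edist_zero_right, Real.enorm_eq_ofReal_abs]
  exact lt_of_lt_of_le ((ENNReal.ofReal_lt_ofReal_iff (by positivity)).mpr hy) myT_radius


lemma phi_small {s : ℝ} (hs : s ∈ Set.Ioo (-(8⁻¹) : ℝ) 1) : |s * exp (-s)| < (exp 1)⁻¹ := by
  obtain ⟨hl, hu⟩ := hs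
  rw [abs_mul, Real.abs_exp]
  rcases le_or_gt 0 s with h0 | h0
  · rw [abs_of_nonneg h0]
    have h1 : s < exp (s - 1) := by
      have := Real.add_one_lt_exp (x := s - 1) (by intro h; exact hu.ne (by linarith))
      linarith
    calc s * exp (-s) < exp (s - 1) * exp (-s) :=
          mul_lt_mul_of_pos_right h1 (Real.exp_pos _)
      _ = (exp 1)⁻¹ := by
          rw [← Real.exp_add, show s - 1 + -s = -1 by ring, Real.exp_neg]
  · rw [abs_of_neg h0]
    have ha : 0 < -s := by linarith
    have ha8 : -s < 8⁻¹ := by linarith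
    have hE : exp (-s) < exp 1 := Real.exp_lt_exp.mpr (by linarith)
    have h3 : (-s) * exp (-s) < 8⁻¹ * exp 1 :=
      mul_lt_mul'' ha8 hE ha.le (Real.exp_pos _).le
    have hid : exp 1 * (exp 1)⁻¹ = 1 := mul_inv_cancel₀ (Real.exp_pos 1).ne'
    have h4 : 8⁻¹ * exp 1 < (exp 1)⁻¹ := by
      nlinarith [Real.exp_one_lt_d9, Real.exp_pos 1, inv_pos.mpr (Real.exp_pos 1)]
    linarith

lemma exp_mul_lt_one {x : ℝ} (hx : |x| < (exp 1)⁻¹) : exp 1 * |x| < 1 :=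
  calc exp 1 * |x| < exp 1 * (exp 1)⁻¹ := mul_lt_mul_of_pos_left hx (Real.exp_pos 1)
    _ = 1 := mul_inv_cancel₀ (Real.exp_pos 1).ne'

/-- The rooted labelled tree function `T^•(z) = Σ_{n≥1} n^{n-1} z^n/n!`
satisfies `T^•(s·e^{−s}) = s` for `0 ≤ s < 1`. -/
theorem stmt_13 (s : ℝ) (h0 : 0 ≤ s) (h1 : s < 1) :
    ∑' n : ℕ, ((n : ℝ) + 1) ^ n * (s * Real.exp (-s)) ^ (n + 1) / (Nat.factorial (n + 1))
      = s := by
  set g : ℝ → ℝ := fun t ↦ (FormalMultilinearSeries.ofScalars ℝ myc).sum (t * exp (-t)) with hg_def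
  have hgt : ∀ t : ℝ, g t = ∑' n : ℕ, myc n * (t * exp (-t)) ^ n := by
    intro t
    have := FormalMultilinearSeries.ofScalars_sum_eq (E := ℝ) myc (t * exp (-t))
    simp only [smul_eq_mul] at this
    exact this
  have hg : AnalyticOnNhd ℝ g (Set.Ioo (-(8⁻¹ : ℝ)) 1) := by
    intro t ht
    have hphi : AnalyticAt ℝ (fun u : ℝ ↦ u * exp (-u)) t :=
      AnalyticAt.mul analyticAt_id (analyticAt_rexp.comp (analyticAt_id.neg))
    exact AnalyticAt.comp (g := (FormalMultilinearSeries.ofScalars ℝ myc).sum)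
      (f := fun u : ℝ ↦ u * exp (-u)) (x := t) (analyticAt_T (phi_small ht)) hphi
  have hid : AnalyticOnNhd ℝ (fun t : ℝ ↦ t) (Set.Ioo (-(8⁻¹ : ℝ)) 1) := fun t _ ↦ analyticAt_id
  have heq : g =ᶠ[𝓝 (0 : ℝ)] fun t ↦ t := by
    filter_upwards [Ioo_mem_nhds (by norm_num : -(8⁻¹ : ℝ) < 0) (by norm_num : (0:ℝ) < 8⁻¹)]
      with t ht
    have habs : |t| < 8⁻¹ := abs_lt.mpr ⟨ht.1, ht.2⟩
    rw [hgt t, small_eq t habs]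
  have main := AnalyticOnNhd.eqOn_of_preconnected_of_eventuallyEq hg hid isPreconnected_Ioo
    (by constructor <;> norm_num : (0:ℝ) ∈ Set.Ioo (-(8⁻¹ : ℝ)) 1) heq
  have hsmem : s ∈ Set.Ioo (-(8⁻¹ : ℝ)) 1 := ⟨by linarith, h1⟩
  have hgs : g s = s := main hsmem
  have hsum : Summable fun n : ℕ ↦ myc n * (s * exp (-s)) ^ n :=
    summable_myc (exp_mul_lt_one (phi_small hsmem))
  calc ∑' n : ℕ, ((n : ℝ) + 1) ^ n * (s * Real.exp (-s)) ^ (n + 1) / (Nat.factorial (n + 1))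
      = ∑' n : ℕ, myc (n + 1) * (s * exp (-s)) ^ (n + 1) := by
        refine tsum_congr fun n ↦ ?_
        show _ = myc (n + 1) * _
        unfold myc
        ring
    _ = s := by
        have := hsum.tsum_eq_zero_add
        rw [hgt s, this] at hgs
        simpa [myc] using hgs
end

section
/- Let {τ_1,…,τ_k} be trees on label sets V_1,…,V_k respectively, with |V_i ∩ V_j| ≤ 1 for all i ≠ j. Define the merging graph M on vertex set [k] ∪ {(p,⋆) : p ∈ V_i ∩ V_j for some i<j}, with an edge between i and (p,⋆) whenever p ∈ V_i. Then the merged graph G (with vertex set ∪V_i and edge set ∪E(τ_i)) is a tree if and only if M is a tree. -/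
set_option linter.unusedSectionVars false
set_option maxHeartbeats 1000000

open SimpleGraph



private lemma reach_of_del {β : Type*} {H : SimpleGraph β} {u v : β}
    (h : (H \ fromEdgeSet {s(u,v)}).Reachable u v) :
    ∀ x y : β, H.Reachable x y → (H \ fromEdgeSet {s(u,v)}).Reachable x y := by
  intro x y ⟨w⟩
  induction w with
  | nil => rfl
  | @cons a b c hadj w ih =>
    refine Reachable.trans ?_ ih
    by_cases he : s(a, b) = s(u, v)
    · rw [Sym2.eq_iff] at he
      rcases he with ⟨rfl, rfl⟩ | ⟨rfl, rfl⟩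
      · exact h
      · exact h.symm
    · exact SimpleGraph.Adj.reachable (by simp [fromEdgeSet_adj, hadj, he])

private lemma conn_del {β : Type*} {H : SimpleGraph β} {u v : β} (hc : H.Connected)
    (h : (H \ fromEdgeSet {s(u,v)}).Reachable u v) : (H \ fromEdgeSet {s(u,v)}).Connected := by
  haveI : Nonempty β := hc.nonempty
  exact ⟨fun x y => reach_of_del h x y (hc.preconnected x y)⟩

private lemma edgeSet_del {β : Type*} (H : SimpleGraph β) (u v : β) :
    (H \ fromEdgeSet {s(u,v)}).edgeSet = H.edgeSet \ {s(u,v)} := by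
  rw [edgeSet_sdiff, edgeSet_fromEdgeSet, edgeSet_sdiff_sdiff_isDiag]

private lemma lemA {β : Type*} [Fintype β] (H : SimpleGraph β) (hc : H.Connected) :
    Fintype.card β ≤ H.edgeSet.ncard + 1 := by
  classical
  generalize hn : H.edgeSet.ncard = n
  induction n using Nat.strong_induction_on generalizing H with
  | _ n ih =>
  by_cases hall : ∀ e ∈ H.edgeSet, H.IsBridge e
  · have hac : H.IsAcyclic := isAcyclic_iff_forall_edge_isBridge.2 hall
    have htree : H.IsTree := ⟨hc, hac⟩
    haveI : Fintype H.edgeSet := Set.Finite.fintype (Set.toFinite _)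
    have h1 := htree.card_edgeFinset
    have h2 : H.edgeFinset.card = H.edgeSet.ncard := (Set.ncard_eq_toFinset_card' _).symm
    omega
  · push_neg at hall
    obtain ⟨e, he, hnb⟩ := hall
    induction e with
    | _ u v =>
    have hadj : H.Adj u v := he
    have hreach : (H \ fromEdgeSet {s(u,v)}).Reachable u v := by
      rw [isBridge_iff] at hnb
      push_neg at hnb
      exact hnb
    have hc' := conn_del hc hreach
    have hes : (H \ fromEdgeSet {s(u,v)}).edgeSet = H.edgeSet \ {s(u,v)} := edgeSet_del H u v
    have hn' : (H \ fromEdgeSet {s(u,v)}).edgeSet.ncard = n - 1 := by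
      rw [hes, Set.ncard_diff_singleton_of_mem he, hn]
    have hpos : 1 ≤ n := by
      rw [← hn]
      have := Set.ncard_pos (Set.toFinite _) |>.2 ⟨_, he⟩
      omega
    have := ih (n-1) (by omega) _ hc' hn'
    omega

private lemma lemB {β : Type*} [Fintype β] (H : SimpleGraph β) (hc : H.Connected)
    (hcard : H.edgeSet.ncard + 1 = Fintype.card β) : H.IsTree := by
  classical
  refine ⟨hc, ?_⟩
  intro v c hcyc
  obtain ⟨u, hadj, c', rfl⟩ : ∃ (u : β) (h : H.Adj v u) (c' : H.Walk u v), c = SimpleGraph.Walk.cons h c' := by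
    cases c with
    | nil => exact absurd rfl hcyc.ne_nil
    | cons h c' => exact ⟨_, h, c', rfl⟩
  have hmem : s(v, u) ∈ (SimpleGraph.Walk.cons hadj c').edges := by
    simp [SimpleGraph.Walk.edges_cons]
  have hnb : ¬ H.IsBridge s(v, u) := by
    rw [isBridge_iff_mem_and_forall_cycle_notMem]
    push_neg
    exact ⟨v, _, hcyc, hmem⟩
    exact hadj
  have hreach : (H \ fromEdgeSet {s(v,u)}).Reachable v u := by
    rw [isBridge_iff] at hnb
    push_neg at hnb
    exact hnb
  have hc' := conn_del hc hreach
  have hn' : (H \ fromEdgeSet {s(v,u)}).edgeSet.ncard = H.edgeSet.ncard - 1 := by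
    rw [edgeSet_del, Set.ncard_diff_singleton_of_mem (H.mem_edgeSet.mpr hadj)]
  have hpos : 1 ≤ H.edgeSet.ncard := by
    have : (s(v,u) : Sym2 β) ∈ H.edgeSet := hadj
    have := Set.ncard_pos (Set.toFinite _) |>.2 ⟨_, this⟩
    omega
  have := lemA _ hc'
  omega


private lemma edgeSet_induce_eq {β : Type*} (H : SimpleGraph β) (s : Set β)
    (h : ∀ a b, H.Adj a b → a ∈ s ∧ b ∈ s) :
    H.edgeSet = Sym2.map Subtype.val '' (H.induce s).edgeSet := by
  ext e
  induction e with
  | _ a b =>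
    simp only [mem_edgeSet, Set.mem_image]
    constructor
    · intro hab
      obtain ⟨ha, hb⟩ := h a b hab
      exact ⟨s(⟨a, ha⟩, ⟨b, hb⟩), by simpa using hab, rfl⟩
    · rintro ⟨e', he', hmap⟩
      induction e' with
      | _ x y =>
        simp only [Sym2.map_pair_eq, Sym2.eq_iff] at hmap
        have hxy : H.Adj x.1 y.1 := by simpa using he'
        rcases hmap with ⟨rfl, rfl⟩ | ⟨rfl, rfl⟩
        · exact hxy
        · exact hxy.symm

private lemma ncard_edgeSet_induce {β : Type*} (H : SimpleGraph β) (s : Set β)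
    (h : ∀ a b, H.Adj a b → a ∈ s ∧ b ∈ s) :
    (H.induce s).edgeSet.ncard = H.edgeSet.ncard := by
  rw [edgeSet_induce_eq H s h, Set.ncard_image_of_injective _ (Sym2.map.injective Subtype.val_injective)]


private lemma ncard_edgeSet_iSup {β : Type*} [Fintype β] {k : ℕ} (τ : Fin k → SimpleGraph β)
    (hdisj : ∀ i j a b, (τ i).Adj a b → (τ j).Adj a b → i = j) :
    (⨆ i, τ i).edgeSet.ncard = ∑ i, (τ i).edgeSet.ncard := by
  classical
  have h1 : (⨆ i, τ i).edgeSet = ⋃ i, (τ i).edgeSet := by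
    ext e
    induction e with
    | _ a b => simp [mem_edgeSet, iSup_adj, Set.mem_iUnion]
  rw [h1, Set.ncard_eq_toFinset_card _ (Set.toFinite _)]
  have h2 : (Set.toFinite (⋃ i, (τ i).edgeSet)).toFinset
      = Finset.univ.biUnion (fun i => (Set.toFinite ((τ i).edgeSet)).toFinset) := by
    ext e
    simp only [Set.Finite.mem_toFinset, Finset.mem_biUnion, Finset.mem_univ, true_and, Set.mem_iUnion]
  rw [h2, Finset.card_biUnion]
  · exact Finset.sum_congr rfl fun i _ => (Set.ncard_eq_toFinset_card _ (Set.toFinite _)).symm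
  · intro i _ j _ hij
    rw [Function.onFun, Finset.disjoint_left]
    intro e hei hej
    simp only [Set.Finite.mem_toFinset] at hei hej
    induction e with
    | _ a b => exact hij (hdisj i j a b hei hej)

private lemma tree_count {α : Type*} [Fintype α] [DecidableEq α] (W : Finset α) (τ : SimpleGraph α)
    (hsupp : ∀ a b, τ.Adj a b → a ∈ W ∧ b ∈ W) (htree : (τ.induce (W : Set α)).IsTree) :
    τ.edgeSet.ncard + 1 = W.card := by
  classical
  haveI : Fintype (τ.induce (W : Set α)).edgeSet := Set.Finite.fintype (Set.toFinite _)
  have h1 := htree.card_edgeFinset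
  have h2 : (τ.induce (W : Set α)).edgeFinset.card = (τ.induce (W : Set α)).edgeSet.ncard :=
    (Set.ncard_eq_toFinset_card' _).symm
  have h3 : (τ.induce (W : Set α)).edgeSet.ncard = τ.edgeSet.ncard :=
    ncard_edgeSet_induce τ _ (fun a b hab => by simpa using hsupp a b hab)
  have h4 : Fintype.card ↥(W : Set α) = W.card := by simp
  omega


section
variable {α : Type*} [Fintype α] [DecidableEq α] {k : ℕ}
  (V : Fin k → Finset α) (τ : Fin k → SimpleGraph α)

-- notation shortcuts
private abbrev Sset : Set α := ↑(Finset.univ.biUnion V)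
private abbrev Gg : SimpleGraph (Sset V) := (⨆ i, τ i : SimpleGraph α).induce (Sset V)
private abbrev Wset : Set (Fin k ⊕ α) :=
  {x : Fin k ⊕ α | (∃ i, x = Sum.inl i) ∨
    ∃ p, x = Sum.inr p ∧ ∃ i j, i ≠ j ∧ p ∈ V i ∧ p ∈ V j}
private abbrev Mm : SimpleGraph (Wset V) :=
  (SimpleGraph.fromRel fun x y : Fin k ⊕ α =>
      ∃ i p, x = Sum.inl i ∧ y = Sum.inr p ∧ p ∈ V i ∧ ∃ j, j ≠ i ∧ p ∈ V j).induce (Wset V)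

private lemma mem_Sset {a : α} (i : Fin k) (ha : a ∈ V i) : a ∈ Sset V := by
  simp only [Finset.coe_biUnion, Finset.coe_univ, Set.mem_iUnion, Finset.mem_coe, Set.mem_univ,
    Set.iUnion_true]
  exact ⟨i, ha⟩

private lemma inl_mem_Wset (i : Fin k) : (Sum.inl i : Fin k ⊕ α) ∈ Wset V := Or.inl ⟨i, rfl⟩

private lemma Gg_adj {x y : Sset V} : (Gg V τ).Adj x y ↔ ∃ i, (τ i).Adj ↑x ↑y :=
  iSup_adj

private lemma Mm_adj {x y : Wset V} : (Mm V).Adj x y ↔ (x : Fin k ⊕ α) ≠ ↑y ∧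
    ((∃ i p, (x : Fin k ⊕ α) = Sum.inl i ∧ (y : Fin k ⊕ α) = Sum.inr p ∧ p ∈ V i ∧
        ∃ j, j ≠ i ∧ p ∈ V j) ∨
      (∃ i p, (y : Fin k ⊕ α) = Sum.inl i ∧ (x : Fin k ⊕ α) = Sum.inr p ∧ p ∈ V i ∧
        ∃ j, j ≠ i ∧ p ∈ V j)) := by
  simp [fromRel_adj]

variable (htree : ∀ i, ((τ i).induce (V i : Set α)).IsTree)

-- reachability inside one tree, transported to G
include htree in
private lemma reach_in_tree (i : Fin k) (x y : Sset V) (hx : ↑x ∈ V i) (hy : ↑y ∈ V i) :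
    (Gg V τ).Reachable x y := by
  have h := ((htree i).isConnected.preconnected ⟨↑x, by exact_mod_cast hx⟩
    ⟨↑y, by exact_mod_cast hy⟩).map
    (G' := Gg V τ)
    { toFun := fun z => ⟨z.1, mem_Sset V i (by exact_mod_cast z.2)⟩
      map_rel' := by
        intro a b hab
        rw [Gg_adj]
        exact ⟨i, by simpa using hab⟩ }
  convert h <;> exact Subtype.ext rfl

-- M connected → G connected
include htree in
private lemma key1 {u v : Wset V} (w : (Mm V).Walk u v) :
    ∀ (x y : Sset V),
      ((∃ i, (u : Fin k ⊕ α) = Sum.inl i ∧ ↑x ∈ V i) ∨ ((u : Fin k ⊕ α) = Sum.inr ↑x)) →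
      ((∃ j, (v : Fin k ⊕ α) = Sum.inl j ∧ ↑y ∈ V j) ∨ ((v : Fin k ⊕ α) = Sum.inr ↑y)) →
      (Gg V τ).Reachable x y := by
  induction w with
  | nil =>
    rintro x y (⟨i, hu, hx⟩ | hu) (⟨j, hv, hy⟩ | hv)
    · rw [hu] at hv
      obtain rfl : i = j := by simpa using hv
      exact reach_in_tree V τ htree i x y hx hy
    · rw [hu] at hv; simp at hv
    · rw [hu] at hv; simp at hv
    · rw [hu] at hv
      obtain rfl : x = y := Subtype.ext (by simpa using hv)
      exact Reachable.refl x
  | @cons u w' v h w ih =>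
    rintro x y hux hvy
    rw [Mm_adj] at h
    obtain ⟨hne, (⟨i, p, hu, hw', hpi, j, hji, hpj⟩ | ⟨i, p, hw', hu, hpi, j, hji, hpj⟩)⟩ := h
    · -- u = inl i, w' = inr p
      have hpS : p ∈ Sset V := mem_Sset V i hpi
      have hx : ↑x ∈ V i := by
        rcases hux with ⟨i', hu', hx⟩ | hu'
        · rw [hu] at hu'; obtain rfl : i = i' := by simpa using hu'
          exact hx
        · rw [hu] at hu'; simp at hu'
      refine (reach_in_tree V τ htree i x ⟨p, hpS⟩ hx hpi).trans ?_
      exact ih ⟨p, hpS⟩ y (Or.inr (by rw [hw'])) hvy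
    · -- u = inr p, w' = inl i
      have hx : (x : α) = p := by
        rcases hux with ⟨i', hu', _⟩ | hu'
        · rw [hu] at hu'; simp at hu'
        · rw [hu] at hu'; simpa using hu'.symm
      exact ih x y (Or.inl ⟨i, hw', by rw [hx]; exact hpi⟩) hvy

include htree in
private lemma conn_M_to_G (hM : (Mm V).Connected) : (Gg V τ).Connected := by
  have hne : Nonempty (Sset V) := by
    obtain ⟨x⟩ := hM.nonempty
    rcases x.2 with ⟨i, hx⟩ | ⟨p, hx, i, j, _, hpi, _⟩
    · obtain ⟨a⟩ := (htree i).isConnected.nonempty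
      exact ⟨⟨↑a, mem_Sset V i (by exact_mod_cast a.2)⟩⟩
    · exact ⟨⟨p, mem_Sset V i hpi⟩⟩
  refine ⟨fun x y => ?_⟩
  have hx : ∃ i, ↑x ∈ V i := by
    have := x.2
    simpa using this
  have hy : ∃ j, ↑y ∈ V j := by
    have := y.2
    simpa using this
  obtain ⟨i, hxi⟩ := hx
  obtain ⟨j, hyj⟩ := hy
  obtain ⟨w⟩ := hM.preconnected ⟨Sum.inl i, inl_mem_Wset V i⟩ ⟨Sum.inl j, inl_mem_Wset V j⟩
  exact key1 V τ htree w x y (Or.inl ⟨i, rfl, hxi⟩) (Or.inl ⟨j, rfl, hyj⟩)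

variable (hsupp : ∀ i a b, (τ i).Adj a b → a ∈ V i ∧ b ∈ V i)

private lemma hop (p : α) (i j : Fin k) (hpi : p ∈ V i) (hpj : p ∈ V j) :
    (Mm V).Reachable ⟨Sum.inl i, inl_mem_Wset V i⟩ ⟨Sum.inl j, inl_mem_Wset V j⟩ := by
  by_cases hij : i = j
  · subst hij; exact Reachable.refl _
  · have hpW : (Sum.inr p : Fin k ⊕ α) ∈ Wset V := Or.inr ⟨p, rfl, i, j, hij, hpi, hpj⟩
    have h1 : (Mm V).Adj ⟨Sum.inl i, inl_mem_Wset V i⟩ ⟨Sum.inr p, hpW⟩ := by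
      rw [Mm_adj]
      exact ⟨by simp, Or.inl ⟨i, p, rfl, rfl, hpi, j, Ne.symm hij, hpj⟩⟩
    have h2 : (Mm V).Adj ⟨Sum.inr p, hpW⟩ ⟨Sum.inl j, inl_mem_Wset V j⟩ := by
      rw [Mm_adj]
      exact ⟨by simp, Or.inr ⟨j, p, rfl, rfl, hpj, i, hij, hpi⟩⟩
    exact h1.reachable.trans h2.reachable

include hsupp in
private lemma key2 {x y : Sset V} (w : (Gg V τ).Walk x y) :
    ∀ i j, ↑x ∈ V i → ↑y ∈ V j →
      (Mm V).Reachable ⟨Sum.inl i, inl_mem_Wset V i⟩ ⟨Sum.inl j, inl_mem_Wset V j⟩ := by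
  induction w with
  | nil => exact fun i j hi hj => hop V _ i j hi hj
  | @cons x z y h w ih =>
    intro i j hi hj
    rw [Gg_adj] at h
    obtain ⟨m, hm⟩ := h
    obtain ⟨hxm, hzm⟩ := hsupp m _ _ hm
    exact (hop V (↑x) i m hi hxm).trans (ih m j hzm hj)

include htree hsupp in
private lemma conn_G_to_M (hG : (Gg V τ).Connected) : (Mm V).Connected := by
  have hne : Nonempty (Wset V) := by
    obtain ⟨x⟩ := hG.nonempty
    have : ∃ i, ↑x ∈ V i := by have := x.2; simpa using this
    obtain ⟨i, _⟩ := this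
    exact ⟨⟨Sum.inl i, inl_mem_Wset V i⟩⟩
  refine ⟨fun u v => ?_⟩
  -- reduce any vertex to an inl vertex
  have reduce : ∀ u : Wset V, ∃ i, (Mm V).Reachable u ⟨Sum.inl i, inl_mem_Wset V i⟩ ∧
      ((V i).Nonempty ∧ ∀ p : α, (u : Fin k ⊕ α) = Sum.inr p → p ∈ V i) := by
    intro u
    rcases hu : (u : Fin k ⊕ α) with i | p
    · refine ⟨i, ?_, ?_, ?_⟩
      · rw [show u = ⟨Sum.inl i, inl_mem_Wset V i⟩ from Subtype.ext hu]
      · obtain ⟨a⟩ := (htree i).isConnected.nonempty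
        exact ⟨↑a, by exact_mod_cast a.2⟩
      · intro p hp; exact absurd hp (by simp)
    · rcases u.2 with ⟨i, hu'⟩ | ⟨q, hu', i, j, hij, hqi, hqj⟩
      · rw [hu] at hu'; simp at hu'
      · rw [hu] at hu'
        obtain rfl : q = p := by simpa using hu'.symm
        refine ⟨i, ?_, ⟨q, hqi⟩, ?_⟩
        · have hadj : (Mm V).Adj u ⟨Sum.inl i, inl_mem_Wset V i⟩ := by
            rw [Mm_adj]
            refine ⟨by rw [hu]; simp, Or.inr ⟨i, q, rfl, hu, hqi, j, hij.symm, hqj⟩⟩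
          exact hadj.reachable
        · intro p' hp'
          obtain rfl : q = p' := by simpa using hp'
          exact hqi
  obtain ⟨i, hui, ⟨a, hai⟩, _⟩ := reduce u
  obtain ⟨j, hvj, ⟨b, hbj⟩, _⟩ := reduce v
  refine hui.trans (Reachable.trans ?_ hvj.symm)
  obtain ⟨w⟩ := hG.preconnected ⟨a, mem_Sset V i hai⟩ ⟨b, mem_Sset V j hbj⟩
  exact key2 V τ hsupp w i j hai hbj


private def interPts : Finset α :=
  Finset.filter (fun p => ∃ i j, i ≠ j ∧ p ∈ V i ∧ p ∈ V j) (Finset.univ.biUnion V)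

private def deg (p : α) : ℕ := (Finset.univ.filter (fun i => p ∈ V i)).card

private lemma mem_interPts {p : α} :
    p ∈ interPts V ↔ ∃ i j, i ≠ j ∧ p ∈ V i ∧ p ∈ V j := by
  constructor
  · intro h
    exact (Finset.mem_filter.1 h).2
  · rintro ⟨i, j, hij, hpi, hpj⟩
    exact Finset.mem_filter.2 ⟨Finset.mem_biUnion.2 ⟨i, Finset.mem_univ i, hpi⟩, i, j, hij, hpi, hpj⟩

private lemma cardS : Nat.card (Sset V) = (Finset.univ.biUnion V).card := by
  rw [Nat.card_coe_set_eq, Set.ncard_coe_finset]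

private lemma cardW : Nat.card (Wset V) = k + (interPts V).card := by
  classical
  rw [Nat.card_coe_set_eq, Set.ncard_eq_toFinset_card _ (Set.toFinite _)]
  have h1 : (Set.toFinite (Wset V)).toFinset
      = Finset.univ.image Sum.inl ∪ (interPts V).image Sum.inr := by
    ext x
    cases x with
    | inl i => simp [Set.Finite.mem_toFinset]
    | inr p =>
      simp only [Set.Finite.mem_toFinset, Set.mem_setOf_eq, Finset.mem_union, Finset.mem_image,
        Finset.mem_univ, true_and]
      constructor
      · rintro (⟨i, h⟩ | ⟨q, hq, hint⟩)
        · simp at h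
        · obtain rfl : q = p := by simpa using hq.symm
          exact Or.inr ⟨_, (mem_interPts V).2 hint, rfl⟩
      · rintro (⟨i, h⟩ | ⟨q, hq, heq⟩)
        · simp at h
        · obtain rfl : q = p := by simpa using heq
          exact Or.inr ⟨_, rfl, (mem_interPts V).1 hq⟩
  rw [h1, Finset.card_union_of_disjoint (by simp [Finset.disjoint_left]),
    Finset.card_image_of_injective _ Sum.inl_injective,
    Finset.card_image_of_injective _ Sum.inr_injective, Finset.card_univ, Fintype.card_fin]

private lemma edges_M : (Mm V).edgeSet.ncard = ∑ p ∈ interPts V, deg V p := by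
  classical
  rw [ncard_edgeSet_induce _ _ ?endpts]
  case endpts =>
    intro a b hab
    rw [fromRel_adj] at hab
    obtain ⟨hne, h | h⟩ := hab <;>
    · obtain ⟨i, p, rfl, rfl, hpi, j, hji, hpj⟩ := h
      constructor <;> first
        | exact Or.inl ⟨_, rfl⟩
        | exact Or.inr ⟨p, rfl, j, i, hji, hpj, hpi⟩
  rw [Set.ncard_eq_toFinset_card _ (Set.toFinite _)]
  have : ∑ p ∈ interPts V, deg V p
      = ((interPts V).sigma (fun p => Finset.univ.filter (fun i => p ∈ V i))).card := by
    simp only [deg, Finset.card_sigma]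
  rw [this]
  refine (Finset.card_bij (fun (a : (_ : α) × Fin k) _ => s(Sum.inl a.2, Sum.inr a.1)) ?_ ?_ ?_).symm
  · rintro ⟨p, i⟩ ha
    rw [Finset.mem_sigma, Finset.mem_filter] at ha
    obtain ⟨hp, -, hpi⟩ := ha
    obtain ⟨i', j', hij', hpi', hpj'⟩ := (mem_interPts V).1 hp
    simp only [Set.Finite.mem_toFinset, mem_edgeSet, fromRel_adj]
    refine ⟨by simp, Or.inl ⟨i, p, rfl, rfl, hpi, ?_⟩⟩
    by_cases hii : i' = i
    · exact ⟨j', by rw [← hii]; exact hij'.symm, hpj'⟩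
    · exact ⟨i', hii, hpi'⟩
  · rintro ⟨p, i⟩ _ ⟨q, j⟩ _ h
    simp only [Sym2.eq_iff] at h
    rcases h with ⟨h1, h2⟩ | ⟨h1, h2⟩
    · obtain rfl : i = j := by simpa using h1
      obtain rfl : p = q := by simpa using h2
      rfl
    · simp at h1
  · intro e he
    simp only [Set.Finite.mem_toFinset] at he
    induction e with
    | _ x y =>
      rw [mem_edgeSet, fromRel_adj] at he
      obtain ⟨hne, h | h⟩ := he
      · obtain ⟨i, p, rfl, rfl, hpi, j, hji, hpj⟩ := h
        refine ⟨⟨p, i⟩, ?_, rfl⟩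
        rw [Finset.mem_sigma, Finset.mem_filter]
        exact ⟨(mem_interPts V).2 ⟨j, i, hji, hpj, hpi⟩, Finset.mem_univ i, hpi⟩
      · obtain ⟨i, p, rfl, rfl, hpi, j, hji, hpj⟩ := h
        refine ⟨⟨p, i⟩, ?_, Sym2.eq_swap⟩
        rw [Finset.mem_sigma, Finset.mem_filter]
        exact ⟨(mem_interPts V).2 ⟨j, i, hji, hpj, hpi⟩, Finset.mem_univ i, hpi⟩

variable (hsupp : ∀ i a b, (τ i).Adj a b → a ∈ V i ∧ b ∈ V i)
  (hint : ∀ i j, i ≠ j → (V i ∩ V j).card ≤ 1)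
  (htree : ∀ i, ((τ i).induce (V i : Set α)).IsTree)

include hsupp hint in
private lemma hdisj : ∀ i j a b, (τ i).Adj a b → (τ j).Adj a b → i = j := by
  intro i j a b hi hj
  by_contra hij
  have h1 := hsupp i a b hi
  have h2 := hsupp j a b hj
  have hcard := hint i j hij
  have ha : a ∈ V i ∩ V j := Finset.mem_inter.2 ⟨h1.1, h2.1⟩
  have hb : b ∈ V i ∩ V j := Finset.mem_inter.2 ⟨h1.2, h2.2⟩
  have := Finset.card_le_one.1 hcard a ha b hb
  exact hi.ne this

include hsupp hint htree in
private lemma edges_G : (Gg V τ).edgeSet.ncard + k = ∑ i, (V i).card := by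
  rw [ncard_edgeSet_induce _ _ ?endpts]
  case endpts =>
    intro a b hab
    rw [iSup_adj] at hab
    obtain ⟨i, hi⟩ := hab
    obtain ⟨h1, h2⟩ := hsupp i a b hi
    exact ⟨Finset.mem_coe.2 (Finset.mem_biUnion.2 ⟨i, Finset.mem_univ i, h1⟩),
      Finset.mem_coe.2 (Finset.mem_biUnion.2 ⟨i, Finset.mem_univ i, h2⟩)⟩
  rw [ncard_edgeSet_iSup τ (hdisj V τ hsupp hint)]
  have : ∀ i, (τ i).edgeSet.ncard + 1 = (V i).card := fun i =>
    tree_count (V i) (τ i) (hsupp i) (htree i)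
  calc (∑ i, (τ i).edgeSet.ncard) + k = ∑ i, ((τ i).edgeSet.ncard + 1) := by
        rw [Finset.sum_add_distrib]; simp
    _ = ∑ i, (V i).card := Finset.sum_congr rfl fun i _ => this i

-- double counting
private lemma double_count : ∑ i, (V i).card = ∑ p ∈ Finset.univ.biUnion V, deg V p := by
  classical
  have hfilter : ∀ i, (Finset.univ.biUnion V).filter (fun p => p ∈ V i) = V i := by
    intro i
    ext p
    simp only [Finset.mem_filter, Finset.mem_biUnion, Finset.mem_univ, true_and]
    exact ⟨fun h => h.2, fun h => ⟨⟨i, h⟩, h⟩⟩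
  calc ∑ i, (V i).card
      = ∑ i, ∑ p ∈ Finset.univ.biUnion V, (if p ∈ V i then 1 else 0) := by
        refine Finset.sum_congr rfl fun i _ => ?_
        rw [← Finset.card_filter, hfilter]
    _ = ∑ p ∈ Finset.univ.biUnion V, ∑ i, (if p ∈ V i then 1 else 0) := Finset.sum_comm
    _ = ∑ p ∈ Finset.univ.biUnion V, deg V p := by
        refine Finset.sum_congr rfl fun p _ => ?_
        rw [deg, Finset.card_filter]

include hsupp hint htree in
private lemma main_count :
    Nat.card (Sset V) + (Mm V).edgeSet.ncard = Nat.card (Wset V) + (Gg V τ).edgeSet.ncard := by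
  classical
  rw [cardS, cardW, edges_M]
  have hG := edges_G V τ htree hsupp hint
  have hdc := double_count V
  -- split the sum over S into interPts and the rest
  have hsplit : ∑ p ∈ Finset.univ.biUnion V, deg V p
      = (∑ p ∈ interPts V, deg V p) + ∑ p ∈ (Finset.univ.biUnion V) \ interPts V, deg V p := by
    rw [← Finset.sum_sdiff (show interPts V ⊆ Finset.univ.biUnion V from
      Finset.filter_subset _ _), add_comm]
  have hone : ∀ p ∈ (Finset.univ.biUnion V) \ interPts V, deg V p = 1 := by
    intro p hp
    rw [Finset.mem_sdiff] at hp
    obtain ⟨hpS, hnp⟩ := hp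
    obtain ⟨i, -, hpi⟩ := Finset.mem_biUnion.1 hpS
    have hle : deg V p ≤ 1 := by
      by_contra hgt
      push_neg at hgt
      obtain ⟨a, ha, b, hb, hab⟩ := Finset.one_lt_card.1 hgt
      rw [Finset.mem_filter] at ha hb
      exact hnp ((mem_interPts V).2 ⟨a, b, hab, ha.2, hb.2⟩)
    have hge : 1 ≤ deg V p := Finset.card_pos.2 ⟨i, Finset.mem_filter.2 ⟨Finset.mem_univ i, hpi⟩⟩
    omega
  have hsum1 : ∑ p ∈ (Finset.univ.biUnion V) \ interPts V, deg V p
      = ((Finset.univ.biUnion V) \ interPts V).card := by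
    rw [Finset.sum_congr rfl hone]; simp
  have hsub := Finset.card_sdiff_add_card_eq_card
    (show interPts V ⊆ Finset.univ.biUnion V from Finset.filter_subset _ _)
  omega

end

/-- Proposition: given trees `τ 1, …, τ k` on label sets `V 1, …, V k` with pairwise
intersections of size at most one, the merged graph `G = ⋃ τ i` (on the union of the
label sets) is a tree if and only if the merging graph `M` — the bipartite graph between
tree indices `[k]` and intersection points, joining `i` to `p` whenever `p ∈ V i` and
`p` is an intersection point — is a tree. -/
theorem stmt_19 {α : Type*} [Fintype α] [DecidableEq α] (k : ℕ)
    (V : Fin k → Finset α) (τ : Fin k → SimpleGraph α)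
    -- each τ i has all its edges inside V i :
    (hsupp : ∀ i a b, (τ i).Adj a b → a ∈ V i ∧ b ∈ V i)
    -- each τ i, viewed on its label set V i, is a tree :
    (htree : ∀ i, ((τ i).induce (V i : Set α)).IsTree)
    -- pairwise intersections have at most one point :
    (hint : ∀ i j, i ≠ j → (V i ∩ V j).card ≤ 1) :
    -- G : the merging, with vertex set ⋃ V i and edge set ⋃ E(τ i)
    (((⨆ i, τ i : SimpleGraph α).induce (↑(Finset.univ.biUnion V) : Set α)).IsTree
      ↔
    -- M : the merging graph on [k] ∪ (intersection points) × {⋆}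
    ((SimpleGraph.fromRel fun x y : Fin k ⊕ α =>
        ∃ i p, x = Sum.inl i ∧ y = Sum.inr p ∧ p ∈ V i ∧ ∃ j, j ≠ i ∧ p ∈ V j).induce
      {x : Fin k ⊕ α | (∃ i, x = Sum.inl i) ∨
        ∃ p, x = Sum.inr p ∧ ∃ i j, i ≠ j ∧ p ∈ V i ∧ p ∈ V j}).IsTree) := by
  classical
  show (Gg V τ).IsTree ↔ (Mm V).IsTree
  haveI instS : Fintype (Sset V) := (Set.toFinite _).fintype
  haveI instW : Fintype (Wset V) := (Set.toFinite _).fintype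
  have hmc := main_count V τ htree hsupp hint
  constructor
  · intro hG
    have hMconn : (Mm V).Connected := conn_G_to_M V τ htree hsupp hG.isConnected
    refine lemB _ hMconn ?_
    have hGcount : (Gg V τ).edgeSet.ncard + 1 = Nat.card (Sset V) := by
      haveI : Fintype (Gg V τ).edgeSet := Set.Finite.fintype (Set.toFinite _)
      have h1 := hG.card_edgeFinset
      have h2 : (Gg V τ).edgeFinset.card = (Gg V τ).edgeSet.ncard :=
        (Set.ncard_eq_toFinset_card' _).symm
      rw [← Nat.card_eq_fintype_card] at h1
      omega
    rw [← Nat.card_eq_fintype_card]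
    omega
  · intro hM
    have hGconn : (Gg V τ).Connected := conn_M_to_G V τ htree hM.isConnected
    refine lemB _ hGconn ?_
    have hMcount : (Mm V).edgeSet.ncard + 1 = Nat.card (Wset V) := by
      haveI : Fintype (Mm V).edgeSet := Set.Finite.fintype (Set.toFinite _)
      have h1 := hM.card_edgeFinset
      have h2 : (Mm V).edgeFinset.card = (Mm V).edgeSet.ncard :=
        (Set.ncard_eq_toFinset_card' _).symm
      rw [← Nat.card_eq_fintype_card] at h1
      omega
    rw [← Nat.card_eq_fintype_card]
    omega
end
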